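/- arXiv:1803.02767 — 3 statements merged into one kernel-verified Lean document; each statement's English description precedes it below -/
import Mathlib

section
/- For every r ∈ [0,1) and every integer n ≥ 1 there is no function v ∈ Ĥ_0 such that μ_n(r)·𝔅_r(v')(t) − v(t) = −cos(nt) for almost every t ∈ (−π,π). (This is the transversality condition used to verify the Crandall–Rabinowitz hypothesis (iv).) -/
open MeasureTheory Real Set Filter Topology

noncomputable section

/-- Lebesgue measure restricted to the interval `(-π, π)`. -/
def muPi : Measure ℝ := volume.restrict (Set.Ioo (-Real.pi) Real.pi)

/-- The (unnormalised) `n`-th cosine Fourier coefficient of `f` over `(-π, π)`. -/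
def cosCoef (f : ℝ → ℝ) (n : ℕ) : ℝ := ∫ t in (-Real.pi)..Real.pi, f t * Real.cos (n * t)

/-- The (unnormalised) `n`-th sine Fourier coefficient of `f` over `(-π, π)`. -/
def sinCoef (f : ℝ → ℝ) (n : ℕ) : ℝ := ∫ t in (-Real.pi)..Real.pi, f t * Real.sin (n * t)

/-- The `n`-th Fourier multiplier `(1 + r^(2n))/(1 - r^(2n))` of the operator `𝔅_r`. -/
def brMult (r : ℝ) (n : ℕ) : ℝ := (1 + r ^ (2 * n)) / (1 - r ^ (2 * n))

/-- `IsBr r f g` says that `g` represents (as an element of `L²(-π,π)`) the image `𝔅_r f`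
of `f` under the operator `𝔅_r`, defined by `𝔅_r (cos n t) = ((1+r^(2n))/(1-r^(2n))) sin n t`
for `n ≥ 1`, `𝔅_r (const) = 0` and `𝔅_r (sin n t) = -((1+r^(2n))/(1-r^(2n))) cos n t` for
`n ≥ 1`; an element of `L²(-π,π)` is uniquely determined (a.e.) by its Fourier coefficients. -/
def IsBr (r : ℝ) (f g : ℝ → ℝ) : Prop :=
  MeasureTheory.MemLp g 2 muPi ∧ cosCoef g 0 = 0 ∧
  (∀ n : ℕ, 1 ≤ n → cosCoef g n = -(brMult r n) * sinCoef f n) ∧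
  (∀ n : ℕ, 1 ≤ n → sinCoef g n = brMult r n * cosCoef f n)

/-- `InH0 v v'` says that the pair `(v, v')` is an element of the space `Ĥ₀`: `v` is an even,
`2π`-periodic, absolutely continuous real function whose weak derivative `v'` (also regarded
as `2π`-periodic) belongs to `L²(-π,π)`. -/
def InH0 (v v' : ℝ → ℝ) : Prop :=
  (∀ t, v (-t) = v t) ∧ Function.Periodic v (2 * Real.pi) ∧
  Function.Periodic v' (2 * Real.pi) ∧
  MeasureTheory.MemLp v' 2 muPi ∧
  (∀ a b : ℝ, IntervalIntegrable v' MeasureTheory.volume a b) ∧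
  (∀ a b : ℝ, v b - v a = ∫ t in a..b, v' t)

/-- The characteristic values `μ_n(r) = (1 - r^(2n))/(n (1 + r^(2n)))`. -/
def muN (r : ℝ) (n : ℕ) : ℝ := (1 - r ^ (2 * n)) / (n * (1 + r ^ (2 * n)))

/-- The `Ĥ₀`-norm of a pair `(v, v')`. -/
def H0norm (v v' : ℝ → ℝ) : ℝ := Real.sqrt (∫ t in (-Real.pi)..Real.pi, (v t) ^ 2 + (v' t) ^ 2)

/-- Integration by parts against a primitive, proved via Fubini. -/
lemma ibp_primitive {a b : ℝ} (hab : a ≤ b) (f u u' : ℝ → ℝ)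
    (hf : ∀ c d : ℝ, IntervalIntegrable f volume c d)
    (hu : ∀ x, HasDerivAt u (u' x) x) (hu'c : Continuous u') :
    ∫ t in a..b, (∫ s in a..t, f s) * u' t
      = (∫ s in a..b, f s) * u b - ∫ t in a..b, f t * u t := by
  have hucont : Continuous u := continuous_iff_continuousAt.2 fun x => (hu x).continuousAt
  set S : Set (ℝ × ℝ) := {p | p.2 ≤ p.1} with hSdef
  have hS : MeasurableSet S := measurableSet_le measurable_snd measurable_fst
  set G : ℝ × ℝ → ℝ := fun p => f p.2 * u' p.1 with hGdef
  have hfI : IntegrableOn f (Ioc a b) volume := (hf a b).1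
  have hu'I : IntegrableOn u' (Ioc a b) volume := hu'c.integrableOn_Ioc
  have hG : Integrable G ((volume.restrict (Ioc a b)).prod (volume.restrict (Ioc a b))) := by
    have h1 : Integrable (fun z : ℝ × ℝ => u' z.1 * f z.2)
        ((volume.restrict (Ioc a b)).prod (volume.restrict (Ioc a b))) :=
      hu'I.mul_prod hfI
    exact h1.congr (Filter.Eventually.of_forall fun p => mul_comm _ _)
  have hind : Integrable (S.indicator G)
      ((volume.restrict (Ioc a b)).prod (volume.restrict (Ioc a b))) := hG.indicator hS
  have key1 : ∀ t ∈ Ioc a b,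
      (∫ s in a..t, f s) * u' t = ∫ s in Ioc a b, S.indicator G (t, s) := by
    intro t ht
    have hpt : ∀ s, S.indicator G (t, s) = (Iic t).indicator (fun s => f s * u' t) s := by
      intro s
      by_cases hst : s ≤ t
      · rw [Set.indicator_of_mem (by exact hst : (t, s) ∈ S),
          Set.indicator_of_mem (by exact hst)]
      · rw [Set.indicator_of_notMem (by exact hst : (t, s) ∉ S),
          Set.indicator_of_notMem (by exact hst)]
    simp_rw [hpt]
    rw [MeasureTheory.integral_indicator measurableSet_Iic,
      MeasureTheory.Measure.restrict_restrict measurableSet_Iic]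
    have hset : Iic t ∩ Ioc a b = Ioc a t := by
      ext x; simp only [mem_inter_iff, mem_Iic, mem_Ioc]
      constructor
      · rintro ⟨h1, h2, h3⟩; exact ⟨h2, h1⟩
      · rintro ⟨h1, h2⟩; exact ⟨h2, h1, le_trans h2 ht.2⟩
    rw [hset, MeasureTheory.integral_mul_const,
      ← intervalIntegral.integral_of_le ht.1.le]
  have key2 : ∀ s ∈ Ioc a b,
      (∫ t in Ioc a b, S.indicator G (t, s)) = f s * (u b - u s) := by
    intro s hs
    have hpt : ∀ t, S.indicator G (t, s) = (Ici s).indicator (fun t => f s * u' t) t := by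
      intro t
      by_cases hst : s ≤ t
      · rw [Set.indicator_of_mem (by exact hst : (t, s) ∈ S),
          Set.indicator_of_mem (by exact hst)]
      · rw [Set.indicator_of_notMem (by exact hst : (t, s) ∉ S),
          Set.indicator_of_notMem (by exact hst)]
    simp_rw [hpt]
    rw [MeasureTheory.integral_indicator measurableSet_Ici,
      MeasureTheory.Measure.restrict_restrict measurableSet_Ici]
    have hset : Ici s ∩ Ioc a b = Icc s b := by
      ext x; simp only [mem_inter_iff, mem_Ici, mem_Ioc, mem_Icc]
      constructor
      · rintro ⟨h1, _, h3⟩; exact ⟨h1, h3⟩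
      · rintro ⟨h1, h2⟩; exact ⟨h1, lt_of_lt_of_le hs.1 h1, h2⟩
    rw [hset, MeasureTheory.integral_Icc_eq_integral_Ioc,
      ← intervalIntegral.integral_of_le hs.2,
      intervalIntegral.integral_const_mul,
      intervalIntegral.integral_eq_sub_of_hasDerivAt (fun x _ => hu x)
        (hu'c.intervalIntegrable s b)]
  calc ∫ t in a..b, (∫ s in a..t, f s) * u' t
      = ∫ t in Ioc a b, (∫ s in a..t, f s) * u' t := intervalIntegral.integral_of_le hab
    _ = ∫ t in Ioc a b, ∫ s in Ioc a b, S.indicator G (t, s) :=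
        MeasureTheory.setIntegral_congr_fun measurableSet_Ioc key1
    _ = ∫ s in Ioc a b, ∫ t in Ioc a b, S.indicator G (t, s) :=
        MeasureTheory.integral_integral_swap hind
    _ = ∫ s in Ioc a b, f s * (u b - u s) :=
        MeasureTheory.setIntegral_congr_fun measurableSet_Ioc key2
    _ = (∫ s in a..b, f s) * u b - ∫ t in a..b, f t * u t := by
        have hfu : IntegrableOn (fun s => f s * u s) (Ioc a b) volume :=
          ((hf a b).mul_continuousOn hucont.continuousOn).1
        simp_rw [mul_sub]
        rw [MeasureTheory.integral_sub (hfI.mul_const (u b)) hfu,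
          MeasureTheory.integral_mul_const,
          intervalIntegral.integral_of_le hab, intervalIntegral.integral_of_le hab]

instance : IsFiniteMeasure muPi := by
  unfold muPi
  constructor
  rw [Measure.restrict_apply_univ, Real.volume_Ioo]
  exact ENNReal.ofReal_lt_top

lemma neg_pi_le_pi : (-Real.pi) ≤ Real.pi := by linarith [Real.pi_pos]

/-- The interval integral over `(-π, π)` equals the integral against `muPi`. -/
lemma interval_eq_muPi (h : ℝ → ℝ) :
    (∫ t in (-Real.pi)..Real.pi, h t) = ∫ t, h t ∂muPi := by
  rw [intervalIntegral.integral_of_le neg_pi_le_pi,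
    MeasureTheory.integral_Ioc_eq_integral_Ioo]
  rfl

lemma integral_cos_nt (n : ℕ) (hn : 1 ≤ n) :
    (∫ t in (-Real.pi)..Real.pi, Real.cos (n * t)) = 0 := by
  have hn0 : (n : ℝ) ≠ 0 := Nat.cast_ne_zero.2 (by omega)
  rw [intervalIntegral.integral_comp_mul_left (fun x => Real.cos x) hn0]
  simp [Real.sin_nat_mul_pi, mul_neg]

lemma integral_cos_sq_nt (n : ℕ) (hn : 1 ≤ n) :
    (∫ t in (-Real.pi)..Real.pi, Real.cos (n * t) ^ 2) = Real.pi := by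
  have hn0 : (n : ℝ) ≠ 0 := Nat.cast_ne_zero.2 (by omega)
  rw [intervalIntegral.integral_comp_mul_left (fun x => Real.cos x ^ 2) hn0]
  rw [integral_cos_sq]
  have h1 : Real.sin ((n : ℝ) * Real.pi) = 0 := Real.sin_nat_mul_pi n
  have h2 : Real.sin ((n : ℝ) * -Real.pi) = 0 := by rw [mul_neg, Real.sin_neg, h1, neg_zero]
  rw [h1, h2]
  simp only [smul_eq_mul, mul_zero, sub_zero, zero_add, mul_neg, sub_neg_eq_add, ← two_mul]
  field_simp

/-- **Transversality (Crandall–Rabinowitz condition (iv)).** For every `r ∈ [0,1)` and every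
integer `n ≥ 1` there is no `v ∈ Ĥ₀` such that
`μ_n(r)·𝔅_r(v')(t) − v(t) = −cos(n t)` for almost every `t ∈ (−π,π)`. -/
theorem babenko_transversality (r : ℝ) (hr : r ∈ Set.Ico (0 : ℝ) 1) (n : ℕ) (hn : 1 ≤ n) :
    ¬ ∃ v v' g : ℝ → ℝ, InH0 v v' ∧ IsBr r v' g ∧
      ∀ᵐ t ∂muPi, muN r n * g t - v t = -Real.cos (n * t) := by
  rintro ⟨v, v', g, ⟨-, -, -, -, hvint, hftc⟩, ⟨hgL2, -, hcos, -⟩, hae⟩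
  have hπ := Real.pi_pos
  have hn0 : (n : ℝ) ≠ 0 := Nat.cast_ne_zero.2 (by omega)
  -- `v` is continuous
  have hvrepr : v = fun t => v 0 + ∫ s in (0:ℝ)..t, v' s := by
    funext t; have := hftc 0 t; linarith
  have hvcont : Continuous v := by
    rw [hvrepr]
    exact continuous_const.add (intervalIntegral.continuous_primitive hvint 0)
  -- integrability facts
  have hcosc : Continuous fun t : ℝ => Real.cos ((n : ℝ) * t) :=
    Real.continuous_cos.comp (continuous_const.mul continuous_id)
  have hgint : Integrable (fun t => g t * Real.cos (n * t)) muPi := by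
    have h1 : Integrable g muPi := hgL2.integrable one_le_two
    have h2 : Integrable (fun t => Real.cos (n * t) * g t) muPi :=
      h1.bdd_mul hcosc.aestronglyMeasurable (c := 1) (Eventually.of_forall fun x => by
        simpa using Real.abs_cos_le_one _)
    exact h2.congr (Eventually.of_forall fun t => mul_comm _ _)
  have hvintc : Integrable (fun t => v t * Real.cos (n * t)) muPi := by
    have : IntegrableOn (fun t => v t * Real.cos (n * t))
        (Set.Icc (-Real.pi) Real.pi) volume := (hvcont.mul hcosc).integrableOn_Icc
    exact this.mono_set Set.Ioo_subset_Icc_self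
  -- multiply the a.e. identity by `cos (n t)` and integrate
  have h1 : ∫ t, (muN r n * (g t * Real.cos (n * t)) - v t * Real.cos (n * t)) ∂muPi
      = ∫ t, -(Real.cos (n * t) ^ 2) ∂muPi := by
    apply MeasureTheory.integral_congr_ae
    filter_upwards [hae] with t ht
    have h := congrArg (fun x => x * Real.cos ((n : ℝ) * t)) ht
    nlinarith [h]
  have hLHS : (∫ t, (muN r n * (g t * Real.cos (n * t)) - v t * Real.cos (n * t)) ∂muPi)
      = muN r n * cosCoef g n - cosCoef v n := by
    rw [MeasureTheory.integral_sub (hgint.const_mul _) hvintc,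
      MeasureTheory.integral_const_mul]
    unfold cosCoef
    rw [interval_eq_muPi, interval_eq_muPi]
  have hRHS : (∫ t, -(Real.cos (n * t) ^ 2) ∂muPi) = -Real.pi := by
    rw [MeasureTheory.integral_neg, ← interval_eq_muPi, integral_cos_sq_nt n hn]
  have hkey : muN r n * cosCoef g n - cosCoef v n = -Real.pi := by
    rw [← hLHS, h1, hRHS]
  -- integration by parts: `sinCoef v' n = -n * cosCoef v n`
  have hibp := ibp_primitive neg_pi_le_pi v' (fun t => Real.sin (n * t))
      (fun t => (n : ℝ) * Real.cos (n * t)) hvint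
      (fun x => by
        have h := ((hasDerivAt_id x).const_mul (n : ℝ)).sin
        simpa [mul_comm] using h)
      (continuous_const.mul hcosc)
  have hprim : ∀ t : ℝ, (∫ s in (-Real.pi)..t, v' s) = v t - v (-Real.pi) :=
    fun t => (hftc (-Real.pi) t).symm
  have hL : (∫ t in (-Real.pi)..Real.pi, (∫ s in (-Real.pi)..t, v' s)
      * ((n : ℝ) * Real.cos (n * t)))
      = (n : ℝ) * cosCoef v n := by
    rw [show (∫ t in (-Real.pi)..Real.pi, (∫ s in (-Real.pi)..t, v' s)
        * ((n : ℝ) * Real.cos (n * t)))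
        = ∫ t in (-Real.pi)..Real.pi,
          ((n : ℝ) * (v t * Real.cos (n * t))
            - v (-Real.pi) * ((n : ℝ) * Real.cos (n * t))) from
      intervalIntegral.integral_congr fun t _ => by rw [hprim t]; ring]
    rw [intervalIntegral.integral_sub (f := fun t => (n : ℝ) * (v t * Real.cos (n * t)))
        (g := fun t => v (-Real.pi) * ((n : ℝ) * Real.cos (n * t)))
        (((hvcont.mul hcosc).intervalIntegrable _ _).const_mul _)
        (((continuous_const.mul hcosc).intervalIntegrable _ _).const_mul _),
      intervalIntegral.integral_const_mul, intervalIntegral.integral_const_mul,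
      intervalIntegral.integral_const_mul, integral_cos_nt n hn]
    unfold cosCoef
    ring
  have hsin' : sinCoef v' n = -(n : ℝ) * cosCoef v n := by
    have h2 : (n : ℝ) * cosCoef v n
        = (∫ s in (-Real.pi)..Real.pi, v' s) * Real.sin ((n : ℝ) * Real.pi)
          - sinCoef v' n := by
      rw [← hL]; exact hibp
    rw [Real.sin_nat_mul_pi, mul_zero, zero_sub] at h2
    linarith
  -- combine everything
  have hg' : cosCoef g n = brMult r n * ((n : ℝ) * cosCoef v n) := by
    rw [hcos n hn, hsin']; ring
  have hx : r ^ (2 * n) < 1 := pow_lt_one₀ hr.1 hr.2 (by omega)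
  have hx0 : (0:ℝ) ≤ r ^ (2 * n) := pow_nonneg hr.1 _
  have hone : muN r n * (brMult r n * (n : ℝ)) = 1 := by
    unfold muN brMult
    have h1 : 1 - r ^ (2 * n) ≠ 0 := by linarith
    have h2 : 1 + r ^ (2 * n) ≠ 0 := by positivity
    field_simp
  rw [hg', show muN r n * (brMult r n * ((n : ℝ) * cosCoef v n))
      = (muN r n * (brMult r n * (n : ℝ))) * cosCoef v n from by ring,
    hone, one_mul, sub_self] at hkey
  linarith
end
end

section
/- Let r ∈ [0,1) and μ ∈ ℝ. There exists a nonzero v ∈ Ĥ_0 with μ·𝔅_r(v') = v almost everywhere on (−π,π) if and only if μ = μ_n(r) for some integer n ≥ 1; and for μ = μ_n(r) the set of solutions v ∈ Ĥ_0 of μ·𝔅_r(v') = v is exactly the one-dimensional space {c·cos(n·) : c ∈ ℝ}. (Thus the null-space of the linearisation μ𝔅_r(d/dt) − I on Ĥ_0 is one-dimensional at each bifurcation point μ_n(r) and trivial otherwise.) -/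
open MeasureTheory Real Set Filter Topology

noncomputable section

lemma intSin (k : ℝ) : ∫ t in (-Real.pi)..Real.pi, Real.sin (k*t) = 0 := by
  rcases eq_or_ne k 0 with rfl | hk
  · simp
  · rw [intervalIntegral.integral_comp_mul_left (fun t => Real.sin t) hk]
    rw [integral_sin]
    rw [mul_neg, Real.cos_neg]
    simp

lemma intCos (k : ℝ) (hk : k ≠ 0) :
    ∫ t in (-Real.pi)..Real.pi, Real.cos (k*t) = 2 * Real.sin (k*Real.pi) / k := by
  rw [intervalIntegral.integral_comp_mul_left (fun t => Real.cos t) hk]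
  rw [integral_cos, mul_neg, Real.sin_neg, smul_eq_mul]
  ring

lemma intCosInt (a : ℤ) : ∫ t in (-Real.pi)..Real.pi, Real.cos (a*t)
    = if a = 0 then 2*Real.pi else 0 := by
  rcases eq_or_ne a 0 with rfl | ha
  · simp [two_mul]
  · rw [if_neg ha, intCos _ (by exact_mod_cast ha), Real.sin_int_mul_pi]
    simp


lemma contCosK (k : ℝ) : Continuous fun t : ℝ => Real.cos (k*t) := by continuity
lemma contSinK (k : ℝ) : Continuous fun t : ℝ => Real.sin (k*t) := by continuity

lemma cosMulCos (j m : ℕ) : ∫ t in (-Real.pi)..Real.pi, Real.cos (j*t) * Real.cos (m*t)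
    = if j = m then (if j = 0 then 2*Real.pi else Real.pi) else 0 := by
  have key : ∀ t:ℝ, Real.cos (j*t) * Real.cos (m*t)
      = (Real.cos (((((j:ℤ)-(m:ℤ)) : ℤ):ℝ)*t) + Real.cos (((((j:ℤ)+(m:ℤ)) : ℤ):ℝ)*t))/2 := by
    intro t
    have e1 : ((((j:ℤ)-(m:ℤ)) : ℤ):ℝ)*t = j*t - m*t := by push_cast; ring
    have e2 : ((((j:ℤ)+(m:ℤ)) : ℤ):ℝ)*t = j*t + m*t := by push_cast; ring
    rw [e1, e2, Real.cos_sub, Real.cos_add]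
    ring
  rw [intervalIntegral.integral_congr (fun t _ => key t), intervalIntegral.integral_div,
    intervalIntegral.integral_add ((contCosK _).intervalIntegrable _ _)
      ((contCosK _).intervalIntegrable _ _), intCosInt, intCosInt]
  rcases eq_or_ne j m with rfl | hjm
  · rcases eq_or_ne j 0 with rfl | hj
    · norm_num
    · rw [if_pos rfl, if_pos (by ring), if_neg (by exact_mod_cast fun h => hj (by omega)),
        if_neg hj]
      ring
  · rw [if_neg hjm, if_neg (by omega), if_neg (by omega)]
    ring

lemma sinMulSin (j m : ℕ) : ∫ t in (-Real.pi)..Real.pi, Real.sin (j*t) * Real.sin (m*t)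
    = if j = m then (if j = 0 then 0 else Real.pi) else 0 := by
  have key : ∀ t:ℝ, Real.sin (j*t) * Real.sin (m*t)
      = (Real.cos (((((j:ℤ)-(m:ℤ)) : ℤ):ℝ)*t) - Real.cos (((((j:ℤ)+(m:ℤ)) : ℤ):ℝ)*t))/2 := by
    intro t
    have e1 : ((((j:ℤ)-(m:ℤ)) : ℤ):ℝ)*t = j*t - m*t := by push_cast; ring
    have e2 : ((((j:ℤ)+(m:ℤ)) : ℤ):ℝ)*t = j*t + m*t := by push_cast; ring
    rw [e1, e2, Real.cos_sub, Real.cos_add]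
    ring
  rw [intervalIntegral.integral_congr (fun t _ => key t), intervalIntegral.integral_div,
    intervalIntegral.integral_sub ((contCosK _).intervalIntegrable _ _)
      ((contCosK _).intervalIntegrable _ _), intCosInt, intCosInt]
  rcases eq_or_ne j m with rfl | hjm
  · rcases eq_or_ne j 0 with rfl | hj
    · norm_num
    · rw [if_pos rfl, if_pos (by omega), if_neg (by omega), if_neg hj]
      ring
  · rw [if_neg hjm, if_neg (by omega), if_neg (by omega)]
    ring

lemma sinMulCos (j m : ℕ) : ∫ t in (-Real.pi)..Real.pi, Real.sin (j*t) * Real.cos (m*t) = 0 := by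
  have key : ∀ t:ℝ, Real.sin (j*t) * Real.cos (m*t)
      = (Real.sin (((j:ℝ)+(m:ℝ))*t) + Real.sin (((j:ℝ)-(m:ℝ))*t))/2 := by
    intro t
    rw [show ((j:ℝ)+m)*t = j*t + m*t by ring, show ((j:ℝ)-m)*t = j*t - m*t by ring,
      Real.sin_add, Real.sin_sub]
    ring
  rw [intervalIntegral.integral_congr (fun t _ => key t), intervalIntegral.integral_div,
    intervalIntegral.integral_add ((contSinK _).intervalIntegrable _ _)
      ((contSinK _).intervalIntegrable _ _), intSin, intSin]
  norm_num

lemma cosMulSin (j m : ℕ) : ∫ t in (-Real.pi)..Real.pi, Real.cos (j*t) * Real.sin (m*t) = 0 := by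
  rw [intervalIntegral.integral_congr (fun t _ => (mul_comm _ _ : Real.cos (j*t) * Real.sin (m*t) = _))]
  exact sinMulCos m j



section algebra

lemma rho_nonneg {r : ℝ} (hr : r ∈ Set.Ico (0:ℝ) 1) (n : ℕ) : 0 ≤ r ^ (2*n) := by
  have := hr.1; positivity

lemma rho_lt_one {r : ℝ} (hr : r ∈ Set.Ico (0:ℝ) 1) {n : ℕ} (hn : 1 ≤ n) : r ^ (2*n) < 1 :=
  pow_lt_one₀ hr.1 hr.2 (by omega)

lemma brMult_pos {r : ℝ} (hr : r ∈ Set.Ico (0:ℝ) 1) {n : ℕ} (hn : 1 ≤ n) : 0 < brMult r n :=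
  div_pos (by have := rho_nonneg hr n; linarith) (by have := rho_lt_one hr hn; linarith)

lemma muN_pos {r : ℝ} (hr : r ∈ Set.Ico (0:ℝ) 1) {n : ℕ} (hn : 1 ≤ n) : 0 < muN r n := by
  have h1 := rho_lt_one hr hn
  have h0 := rho_nonneg hr n
  have hnn : (0:ℝ) < (n:ℝ) := by exact_mod_cast Nat.pos_of_ne_zero (by omega)
  exact div_pos (by linarith) (by positivity)

lemma muN_mul_brMult {r : ℝ} (hr : r ∈ Set.Ico (0:ℝ) 1) {n : ℕ} (hn : 1 ≤ n) :
    muN r n * ((n:ℝ) * brMult r n) = 1 := by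
  have h1 := rho_lt_one hr hn
  have h0 := rho_nonneg hr n
  have hne : (1:ℝ) - r ^ (2*n) ≠ 0 := by linarith
  have hne2 : (1:ℝ) + r ^ (2*n) ≠ 0 := by linarith
  have hnn : (n:ℝ) ≠ 0 := Nat.cast_ne_zero.2 (by omega)
  simp only [muN, brMult]
  field_simp

lemma eq_muN_iff {r : ℝ} (hr : r ∈ Set.Ico (0:ℝ) 1) {μ : ℝ} {n : ℕ} (hn : 1 ≤ n) :
    μ * ((n:ℝ) * brMult r n) = 1 ↔ μ = muN r n := by
  have h := muN_mul_brMult hr hn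
  have hb : (n:ℝ) * brMult r n ≠ 0 := by
    have := brMult_pos hr hn
    have hnn : (0:ℝ) < (n:ℝ) := by exact_mod_cast Nat.pos_of_ne_zero (by omega)
    positivity
  constructor
  · intro hμ
    exact mul_right_cancel₀ hb (hμ.trans h.symm)
  · rintro rfl; exact h

lemma sum_key {x : ℝ} (hx0 : 0 ≤ x) (hx1 : x < 1) {k : ℕ} (hk : 1 ≤ k) :
    (2*(k:ℝ)+1) * x^k < ∑ j ∈ Finset.range (2*k+1), x^j := by
  have hterm : ∀ j ∈ Finset.range (2*k+1), 0 ≤ (x^j + x^(2*k-j)) - 2*x^k := by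
    intro j hj
    rw [Finset.mem_range] at hj
    have pair : ∀ i : ℕ, i ≤ k → 0 ≤ (x^i + x^(2*k-i)) - 2*x^k := by
      intro i hik
      have e1 : x^i * x^(k-i) = x^k := by rw [← pow_add]; congr 1; omega
      have e2 : x^k * x^(k-i) = x^(2*k-i) := by rw [← pow_add]; congr 1; omega
      have h1 : x^k ≤ x^i := pow_le_pow_of_le_one hx0 hx1.le hik
      have h2 : x^(k-i) ≤ 1 := pow_le_one₀ hx0 hx1.le
      nlinarith [mul_nonneg (by linarith : (0:ℝ) ≤ x^i - x^k) (by linarith : (0:ℝ) ≤ 1 - x^(k-i))]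
    rcases le_or_gt j k with h | h
    · exact pair j h
    · have := pair (2*k-j) (by omega)
      have e : 2*k - (2*k-j) = j := by omega
      rw [e] at this
      linarith
  have hzero : 0 < (x^0 + x^(2*k-0)) - 2*x^k := by
    have hk1 : x^k < 1 := pow_lt_one₀ hx0 hx1 (by omega)
    have e : x^(2*k) = x^k * x^k := by rw [← pow_add]; congr 1; omega
    simp only [pow_zero, Nat.sub_zero]
    nlinarith
  have hsum : 0 < ∑ j ∈ Finset.range (2*k+1), ((x^j + x^(2*k-j)) - 2*x^k) :=
    Finset.sum_pos' hterm ⟨0, Finset.mem_range.2 (by omega), hzero⟩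
  have hrefl : ∑ j ∈ Finset.range (2*k+1), x^(2*k-j) = ∑ j ∈ Finset.range (2*k+1), x^j := by
    rw [← Finset.sum_range_reflect (fun j => x^j) (2*k+1)]
    exact Finset.sum_congr rfl fun j hj => by congr 1
  have hexp : ∑ j ∈ Finset.range (2*k+1), ((x^j + x^(2*k-j)) - 2*x^k)
      = 2 * (∑ j ∈ Finset.range (2*k+1), x^j) - (2*(k:ℝ)+1) * (2*x^k) := by
    rw [Finset.sum_sub_distrib, Finset.sum_add_distrib, hrefl, Finset.sum_const]
    simp only [Finset.card_range, nsmul_eq_mul]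
    push_cast
    ring
  rw [hexp] at hsum
  linarith

lemma muN_succ_lt {r : ℝ} (hr : r ∈ Set.Ico (0:ℝ) 1) {k : ℕ} (hk : 1 ≤ k) :
    muN r (k+1) < muN r k := by
  set x := r^2 with hx
  have hx0 : 0 ≤ x := sq_nonneg r
  have hx1 : x < 1 := pow_lt_one₀ hr.1 hr.2 (by omega)
  have hpow : ∀ m : ℕ, r ^ (2*m) = x^m := fun m => by rw [hx, ← pow_mul]
  have hxk1 : x^k < 1 := pow_lt_one₀ hx0 hx1 (by omega)
  have hxk1' : x^(k+1) < 1 := pow_lt_one₀ hx0 hx1 (by omega)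
  have hxk0 : 0 ≤ x^k := by positivity
  have hxk0' : 0 ≤ x^(k+1) := by positivity
  have hkpos : (0:ℝ) < k := by exact_mod_cast Nat.pos_of_ne_zero (by omega)
  have hsum := sum_key hx0 hx1 hk
  have hgeom : (1:ℝ) - x^(2*k+1) = (1-x) * ∑ j ∈ Finset.range (2*k+1), x^j := by
    linear_combination geom_sum_mul x (2*k+1)
  have hmain : 0 < (1-x) * ((∑ j ∈ Finset.range (2*k+1), x^j) - (2*(k:ℝ)+1)*x^k) :=
    mul_pos (by linarith) (by linarith)
  rw [muN, muN, hpow, hpow, div_lt_div_iff₀ (by push_cast; positivity) (by positivity)]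
  have e1 : x^(k+1) = x^k * x := pow_succ x k
  have e2 : x^(2*k+1) = x^k * x^k * x := by rw [pow_succ, two_mul, pow_add]
  push_cast
  nlinarith [hmain, hgeom, e1, e2]

lemma muN_inj {r : ℝ} (hr : r ∈ Set.Ico (0:ℝ) 1) {m n : ℕ} (hm : 1 ≤ m) (hn : 1 ≤ n)
    (h : muN r m = muN r n) : m = n := by
  have hanti : StrictAnti (fun k => muN r (k+1)) :=
    strictAnti_nat_of_succ_lt (fun k => muN_succ_lt hr (by omega))
  have e : muN r ((m-1)+1) = muN r ((n-1)+1) := by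
    rw [Nat.sub_add_cancel hm, Nat.sub_add_cancel hn]; exact h
  have := hanti.injective e
  omega

end algebra



lemma neg_pi_lt_pi : -Real.pi < Real.pi := by linarith [Real.pi_pos]

lemma muPi_eq : muPi = volume.restrict (Set.Ioc (-Real.pi) Real.pi) :=
  Measure.restrict_congr_set Ioo_ae_eq_Ioc

lemma intervalIntegral_eq_Ioc (f : ℝ → ℝ) :
    ∫ t in (-Real.pi)..Real.pi, f t = ∫ t in Set.Ioc (-Real.pi) Real.pi, f t :=
  intervalIntegral.integral_of_le neg_pi_lt_pi.le

lemma parts_swap (w c : ℝ → ℝ) (hw : IntegrableOn w (Set.Ioc (-Real.pi) Real.pi))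
    (hc : Continuous c) :
    (∫ t in Set.Ioc (-Real.pi) Real.pi, w t * ∫ s in (-Real.pi)..t, c s)
      = ∫ s in Set.Ioc (-Real.pi) Real.pi, c s * ∫ t in s..Real.pi, w t := by
  set μ := volume.restrict (Set.Ioc (-Real.pi) Real.pi) with hμ
  have hcμ : Integrable c μ := hc.integrableOn_Ioc
  set D : Set (ℝ × ℝ) := {p | p.2 ≤ p.1} with hD
  have hDmeas : MeasurableSet D := measurableSet_le measurable_snd measurable_fst
  set F : ℝ × ℝ → ℝ := D.indicator (fun p => w p.1 * c p.2) with hF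
  have hint : Integrable F (μ.prod μ) := (Integrable.mul_prod hw hcμ).indicator hDmeas
  have swap := MeasureTheory.integral_integral_swap (f := fun t s => F (t, s)) (μ := μ) (ν := μ)
    (by exact hint)
  have lhs : ∀ t ∈ Set.Ioc (-Real.pi) Real.pi,
      (∫ s, F (t, s) ∂μ) = w t * ∫ s in (-Real.pi)..t, c s := by
    intro t ht
    have e1 : (fun s => F (t, s)) = (Set.Iic t).indicator (fun s => w t * c s) := by
      funext s
      by_cases h : s ≤ t
      · rw [hF, Set.indicator_of_mem (by exact h : (t,s) ∈ D),
          Set.indicator_of_mem (by exact h : s ∈ Set.Iic t)]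
      · rw [hF, Set.indicator_of_notMem (by exact h : ¬ (t,s) ∈ D),
          Set.indicator_of_notMem (by exact h : ¬ s ∈ Set.Iic t)]
    rw [e1, MeasureTheory.integral_indicator measurableSet_Iic, hμ,
      Measure.restrict_restrict measurableSet_Iic]
    have e2 : Set.Iic t ∩ Set.Ioc (-Real.pi) Real.pi = Set.Ioc (-Real.pi) t := by
      rw [Set.inter_comm, Set.Ioc_inter_Iic, min_eq_right ht.2]
    rw [e2, MeasureTheory.integral_const_mul,
      ← intervalIntegral.integral_of_le ht.1.le]
  have rhs : ∀ s ∈ Set.Ioc (-Real.pi) Real.pi,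
      (∫ t, F (t, s) ∂μ) = c s * ∫ t in s..Real.pi, w t := by
    intro s hs
    have e1 : (fun t => F (t, s)) = (Set.Ici s).indicator (fun t => w t * c s) := by
      funext t
      by_cases h : s ≤ t
      · rw [hF, Set.indicator_of_mem (by exact h : (t,s) ∈ D),
          Set.indicator_of_mem (by exact h : t ∈ Set.Ici s)]
      · rw [hF, Set.indicator_of_notMem (by exact h : ¬ (t,s) ∈ D),
          Set.indicator_of_notMem (by exact h : ¬ t ∈ Set.Ici s)]
    rw [e1, MeasureTheory.integral_indicator measurableSet_Ici, hμ,
      Measure.restrict_restrict measurableSet_Ici]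
    have e2 : Set.Ici s ∩ Set.Ioc (-Real.pi) Real.pi = Set.Icc s Real.pi := by
      ext x
      simp only [Set.mem_inter_iff, Set.mem_Ici, Set.mem_Ioc, Set.mem_Icc]
      constructor
      · rintro ⟨h1, _, h3⟩; exact ⟨h1, h3⟩
      · rintro ⟨h1, h2⟩; exact ⟨h1, lt_of_lt_of_le hs.1 h1, h2⟩
    rw [e2, ← Measure.restrict_congr_set Ioc_ae_eq_Icc, MeasureTheory.integral_mul_const,
      ← intervalIntegral.integral_of_le hs.2, mul_comm]
  calc (∫ t in Set.Ioc (-Real.pi) Real.pi, w t * ∫ s in (-Real.pi)..t, c s)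
      = ∫ t, (∫ s, F (t, s) ∂μ) ∂μ := (setIntegral_congr_fun measurableSet_Ioc
        (fun t ht => (lhs t ht).symm))
    _ = ∫ s, (∫ t, F (t, s) ∂μ) ∂μ := swap
    _ = ∫ s in Set.Ioc (-Real.pi) Real.pi, c s * ∫ t in s..Real.pi, w t :=
        setIntegral_congr_fun measurableSet_Ioc (fun s hs => rhs s hs)

section coefs

lemma intCosNat {m : ℕ} (hm : 1 ≤ m) : ∫ t in (-Real.pi)..Real.pi, Real.cos (m*t) = 0 := by
  have h := intCosInt (m:ℤ)
  rw [if_neg (by omega)] at h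
  have e : ∀ t:ℝ, Real.cos (((m:ℤ):ℝ)*t) = Real.cos ((m:ℝ)*t) := by
    intro t; norm_num
  rw [intervalIntegral.integral_congr (fun t _ => e t)] at h
  exact h

lemma cosCoef_cos (c : ℝ) (n m : ℕ) :
    cosCoef (fun t => c * Real.cos (n*t)) m
      = c * (if n = m then (if n = 0 then 2*Real.pi else Real.pi) else 0) := by
  rw [cosCoef, ← cosMulCos n m, ← intervalIntegral.integral_const_mul]
  congr 1
  funext t
  ring

lemma sinCoef_cos (c : ℝ) (n m : ℕ) : sinCoef (fun t => c * Real.cos (n*t)) m = 0 := by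
  rw [sinCoef]
  have : ∀ t:ℝ, (fun t => c * Real.cos (n*t)) t * Real.sin (m*t)
      = c * (Real.cos (n*t) * Real.sin (m*t)) := fun t => by ring
  rw [intervalIntegral.integral_congr (fun t _ => this t),
    intervalIntegral.integral_const_mul, cosMulSin]
  ring

lemma sinCoef_sin (c : ℝ) (n m : ℕ) :
    sinCoef (fun t => c * Real.sin (n*t)) m
      = c * (if n = m then (if n = 0 then 0 else Real.pi) else 0) := by
  rw [sinCoef, ← sinMulSin n m, ← intervalIntegral.integral_const_mul]
  congr 1
  funext t
  ring

lemma cosCoef_sin (c : ℝ) (n m : ℕ) : cosCoef (fun t => c * Real.sin (n*t)) m = 0 := by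
  rw [cosCoef]
  have : ∀ t:ℝ, (fun t => c * Real.sin (n*t)) t * Real.cos (m*t)
      = c * (Real.sin (n*t) * Real.cos (m*t)) := fun t => by ring
  rw [intervalIntegral.integral_congr (fun t _ => this t),
    intervalIntegral.integral_const_mul, sinMulCos]
  ring

lemma sinCoef_even {v : ℝ → ℝ} (hv : ∀ t, v (-t) = v t) (m : ℕ) : sinCoef v m = 0 := by
  have key := intervalIntegral.integral_comp_neg (fun t => v t * Real.sin (m*t))
    (a := -Real.pi) (b := Real.pi)
  rw [neg_neg] at key
  have e : ∀ x:ℝ, v (-x) * Real.sin ((m:ℝ) * -x) = -(v x * Real.sin (m*x)) := fun x => by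
    rw [hv, mul_neg, Real.sin_neg]; ring
  rw [intervalIntegral.integral_congr (fun x _ => e x), intervalIntegral.integral_neg] at key
  have : sinCoef v m = ∫ t in (-Real.pi)..Real.pi, v t * Real.sin (m*t) := rfl
  rw [this]
  linarith [key]

end coefs

section parts

variable {v v' : ℝ → ℝ}

lemma v_cont (h : InH0 v v') : Continuous v := by
  obtain ⟨_, _, _, _, hii, hftc⟩ := h
  have e : v = fun t => v (-Real.pi) + ∫ s in (-Real.pi)..t, v' s := by
    funext t
    have := hftc (-Real.pi) t
    linarith
  rw [e]
  exact continuous_const.add (intervalIntegral.continuous_primitive hii _)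

lemma sinCoef_parts (h : InH0 v v') {m : ℕ} (hm : 1 ≤ m) :
    sinCoef v' m = -(m:ℝ) * cosCoef v m := by
  obtain ⟨heven, hper, hper', hmem, hii, hftc⟩ := h
  have hcont : Continuous v := v_cont ⟨heven, hper, hper', hmem, hii, hftc⟩
  have hmne : (m:ℝ) ≠ 0 := Nat.cast_ne_zero.2 (by omega)
  have hsin : ∀ t:ℝ, Real.sin ((m:ℝ)*t) = m * ∫ s in (-Real.pi)..t, Real.cos ((m:ℝ)*s) := by
    intro t
    rw [intervalIntegral.integral_comp_mul_left (fun s => Real.cos s) hmne, integral_cos,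
      smul_eq_mul]
    have : Real.sin ((m:ℝ) * -Real.pi) = 0 := by
      rw [mul_neg, Real.sin_neg, Real.sin_nat_mul_pi, neg_zero]
    rw [this, sub_zero]
    field_simp
  have step1 : sinCoef v' m
      = (m:ℝ) * ∫ t in Set.Ioc (-Real.pi) Real.pi, v' t * ∫ s in (-Real.pi)..t, Real.cos ((m:ℝ)*s) := by
    rw [sinCoef, intervalIntegral_eq_Ioc, ← MeasureTheory.integral_const_mul]
    apply setIntegral_congr_fun measurableSet_Ioc
    intro t _
    simp only []
    rw [hsin t]
    ring
  rw [step1, parts_swap v' (fun s => Real.cos ((m:ℝ)*s)) (hii (-Real.pi) Real.pi).1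
    (contCosK _)]
  have step2 : ∫ s in Set.Ioc (-Real.pi) Real.pi, Real.cos ((m:ℝ)*s) * ∫ t in s..Real.pi, v' t
      = ∫ s in Set.Ioc (-Real.pi) Real.pi,
          (v Real.pi * Real.cos ((m:ℝ)*s) - v s * Real.cos ((m:ℝ)*s)) := by
    apply setIntegral_congr_fun measurableSet_Ioc
    intro s _
    simp only []
    rw [← hftc s Real.pi]
    ring
  rw [step2, MeasureTheory.integral_sub (g := fun s => v s * Real.cos ((m:ℝ)*s))
    (Integrable.const_mul ((contCosK (m:ℝ)).integrableOn_Ioc) _)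
    ((hcont.mul (contCosK (m:ℝ))).integrableOn_Ioc),
    MeasureTheory.integral_const_mul, ← intervalIntegral_eq_Ioc, ← intervalIntegral_eq_Ioc,
    intCosNat hm]
  have : (∫ t in (-Real.pi)..Real.pi, v t * Real.cos ((m:ℝ)*t)) = cosCoef v m := rfl
  rw [this]
  ring

lemma cosCoef_parts (h : InH0 v v') {m : ℕ} (hm : 1 ≤ m) : cosCoef v' m = 0 := by
  obtain ⟨heven, hper, hper', hmem, hii, hftc⟩ := h
  have hcont : Continuous v := v_cont ⟨heven, hper, hper', hmem, hii, hftc⟩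
  have hmne : (m:ℝ) ≠ 0 := Nat.cast_ne_zero.2 (by omega)
  have hcos : ∀ t:ℝ, (∫ s in (-Real.pi)..t, -(m:ℝ) * Real.sin ((m:ℝ)*s))
      = Real.cos ((m:ℝ)*t) - Real.cos ((m:ℝ)*Real.pi) := by
    intro t
    rw [intervalIntegral.integral_const_mul,
      intervalIntegral.integral_comp_mul_left (fun s => Real.sin s) hmne, integral_sin,
      smul_eq_mul]
    have e : Real.cos ((m:ℝ) * -Real.pi) = Real.cos ((m:ℝ)*Real.pi) := by
      rw [mul_neg, Real.cos_neg]
    rw [e]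
    field_simp
    ring
  have i1 : IntegrableOn v' (Set.Ioc (-Real.pi) Real.pi) := (hii (-Real.pi) Real.pi).1
  have step1 : cosCoef v' m
      = Real.cos ((m:ℝ)*Real.pi) * (∫ t in Set.Ioc (-Real.pi) Real.pi, v' t)
        + ∫ t in Set.Ioc (-Real.pi) Real.pi,
            v' t * ∫ s in (-Real.pi)..t, -(m:ℝ) * Real.sin ((m:ℝ)*s) := by
    have i2' : IntegrableOn
        (fun t => (Real.cos ((m:ℝ)*t) - Real.cos ((m:ℝ)*Real.pi)) * v' t)
        (Set.Ioc (-Real.pi) Real.pi) := by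
      apply Integrable.bdd_mul (c := 2) i1
      · exact ((Real.continuous_cos.comp
          (continuous_const.mul continuous_id)).sub continuous_const).aestronglyMeasurable
      · refine Filter.Eventually.of_forall (fun t => ?_)
        have b1 := Real.abs_cos_le_one ((m:ℝ)*t)
        have b2 := Real.abs_cos_le_one ((m:ℝ)*Real.pi)
        rw [Real.norm_eq_abs]
        calc |Real.cos ((m:ℝ)*t) - Real.cos ((m:ℝ)*Real.pi)|
            ≤ |Real.cos ((m:ℝ)*t)| + |Real.cos ((m:ℝ)*Real.pi)| := abs_sub _ _
          _ ≤ 2 := by linarith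
    have i2 : IntegrableOn
        (fun t => v' t * ∫ s in (-Real.pi)..t, -(m:ℝ) * Real.sin ((m:ℝ)*s))
        (Set.Ioc (-Real.pi) Real.pi) :=
      i2'.congr (Filter.Eventually.of_forall (fun t => by simp only []; rw [hcos t]; ring))
    rw [cosCoef, intervalIntegral_eq_Ioc, ← MeasureTheory.integral_const_mul,
      ← MeasureTheory.integral_add (i1.const_mul _) i2]
    apply setIntegral_congr_fun measurableSet_Ioc
    intro t _
    simp only []
    rw [hcos t]
    ring
  have hveq : v (-Real.pi) = v Real.pi := heven Real.pi
  have hint0 : (∫ t in Set.Ioc (-Real.pi) Real.pi, v' t) = 0 := by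
    rw [← intervalIntegral_eq_Ioc, ← hftc (-Real.pi) Real.pi, hveq, sub_self]
  rw [step1, hint0, mul_zero, zero_add,
    parts_swap v' (fun s => -(m:ℝ) * Real.sin ((m:ℝ)*s)) i1
      (continuous_const.mul (contSinK (m:ℝ)))]
  have step2 : ∫ s in Set.Ioc (-Real.pi) Real.pi,
        (-(m:ℝ) * Real.sin ((m:ℝ)*s)) * ∫ t in s..Real.pi, v' t
      = ∫ s in Set.Ioc (-Real.pi) Real.pi,
          ((-(m:ℝ) * v Real.pi) * Real.sin ((m:ℝ)*s) + (m:ℝ) * (v s * Real.sin ((m:ℝ)*s))) := by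
    apply setIntegral_congr_fun measurableSet_Ioc
    intro s _
    simp only []
    rw [← hftc s Real.pi]
    ring
  rw [step2, MeasureTheory.integral_add (g := fun s => (m:ℝ) * (v s * Real.sin ((m:ℝ)*s)))
      (((contSinK (m:ℝ)).integrableOn_Ioc).const_mul _)
      (((hcont.mul (contSinK (m:ℝ))).integrableOn_Ioc).const_mul _),
    MeasureTheory.integral_const_mul, MeasureTheory.integral_const_mul,
    ← intervalIntegral_eq_Ioc, ← intervalIntegral_eq_Ioc, intSin]
  have e2 : (∫ t in (-Real.pi)..Real.pi, v t * Real.sin ((m:ℝ)*t)) = sinCoef v m := rfl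
  rw [e2, sinCoef_even heven]
  ring

end parts

section unique

lemma isFiniteMuPi : IsFiniteMeasure muPi := by
  constructor
  rw [muPi, Measure.restrict_apply_univ]
  simp [Real.volume_Ioo]

lemma intIoc_cos_int (g : ℝ → ℝ) (hg : ∀ m : ℕ, cosCoef g m = 0) (n : ℤ) :
    (∫ x in Set.Ioc (-Real.pi) Real.pi, g x * Real.cos ((n:ℝ)*x)) = 0 := by
  have base : ∀ m : ℕ, (∫ x in Set.Ioc (-Real.pi) Real.pi, g x * Real.cos ((m:ℝ)*x)) = 0 :=
    fun m => by rw [← intervalIntegral_eq_Ioc]; exact hg m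
  rcases Int.natAbs_eq n with h | h
  · have e : ∀ x:ℝ, Real.cos ((n:ℝ)*x) = Real.cos ((n.natAbs:ℝ)*x) := by
      intro x; nth_rewrite 1 [h]; push_cast [Nat.cast_natAbs]; ring_nf
    calc (∫ x in Set.Ioc (-Real.pi) Real.pi, g x * Real.cos ((n:ℝ)*x))
        = ∫ x in Set.Ioc (-Real.pi) Real.pi, g x * Real.cos ((n.natAbs:ℝ)*x) := by
          exact setIntegral_congr_fun measurableSet_Ioc (fun x _ => by rw [e x])
      _ = 0 := base n.natAbs
  · have e : ∀ x:ℝ, Real.cos ((n:ℝ)*x) = Real.cos ((n.natAbs:ℝ)*x) := by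
      intro x
      have : ((n:ℝ)) = -(n.natAbs:ℝ) := by exact_mod_cast congrArg (fun z : ℤ => (z:ℝ)) h
      rw [this, neg_mul, Real.cos_neg]
    calc (∫ x in Set.Ioc (-Real.pi) Real.pi, g x * Real.cos ((n:ℝ)*x))
        = ∫ x in Set.Ioc (-Real.pi) Real.pi, g x * Real.cos ((n.natAbs:ℝ)*x) := by
          exact setIntegral_congr_fun measurableSet_Ioc (fun x _ => by rw [e x])
      _ = 0 := base n.natAbs

lemma intIoc_sin_int (g : ℝ → ℝ) (hg : ∀ m : ℕ, sinCoef g m = 0) (n : ℤ) :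
    (∫ x in Set.Ioc (-Real.pi) Real.pi, g x * Real.sin ((n:ℝ)*x)) = 0 := by
  have base : ∀ m : ℕ, (∫ x in Set.Ioc (-Real.pi) Real.pi, g x * Real.sin ((m:ℝ)*x)) = 0 :=
    fun m => by rw [← intervalIntegral_eq_Ioc]; exact hg m
  rcases Int.natAbs_eq n with h | h
  · have e : ∀ x:ℝ, Real.sin ((n:ℝ)*x) = Real.sin ((n.natAbs:ℝ)*x) := by
      intro x; nth_rewrite 1 [h]; push_cast [Nat.cast_natAbs]; ring_nf
    calc (∫ x in Set.Ioc (-Real.pi) Real.pi, g x * Real.sin ((n:ℝ)*x))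
        = ∫ x in Set.Ioc (-Real.pi) Real.pi, g x * Real.sin ((n.natAbs:ℝ)*x) := by
          exact setIntegral_congr_fun measurableSet_Ioc (fun x _ => by rw [e x])
      _ = 0 := base n.natAbs
  · have e : ∀ x:ℝ, g x * Real.sin ((n:ℝ)*x) = -(g x * Real.sin ((n.natAbs:ℝ)*x)) := by
      intro x
      have : ((n:ℝ)) = -(n.natAbs:ℝ) := by exact_mod_cast congrArg (fun z : ℤ => (z:ℝ)) h
      rw [this, neg_mul, Real.sin_neg]
      ring
    calc (∫ x in Set.Ioc (-Real.pi) Real.pi, g x * Real.sin ((n:ℝ)*x))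
        = ∫ x in Set.Ioc (-Real.pi) Real.pi, -(g x * Real.sin ((n.natAbs:ℝ)*x)) := by
          exact setIntegral_congr_fun measurableSet_Ioc (fun x _ => by rw [e x])
      _ = -∫ x in Set.Ioc (-Real.pi) Real.pi, g x * Real.sin ((n.natAbs:ℝ)*x) :=
          MeasureTheory.integral_neg _
      _ = 0 := by rw [base n.natAbs, neg_zero]

lemma fourier_unique {f : ℝ → ℝ} (hf : MemLp f 2 muPi)
    (h0 : ∀ m : ℕ, cosCoef f m = 0) (hs : ∀ m : ℕ, sinCoef f m = 0) :
    ∀ᵐ t ∂muPi, f t = 0 := by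
  haveI hT : Fact (0 < 2*Real.pi) := ⟨by positivity⟩
  haveI := isFiniteMuPi
  have hend : -Real.pi + 2*Real.pi = Real.pi := by ring
  -- measurable representative
  have hmeas := hf.aestronglyMeasurable
  set f₁ : ℝ → ℝ := hmeas.mk f with hf₁
  have hsm : StronglyMeasurable f₁ := hmeas.stronglyMeasurable_mk
  have hae : f =ᵐ[muPi] f₁ := hmeas.ae_eq_mk
  have hmem1 : MemLp f₁ 2 muPi := hf.ae_eq hae
  have haeIoc : f =ᵐ[volume.restrict (Set.Ioc (-Real.pi) Real.pi)] f₁ := by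
    rw [← muPi_eq]; exact hae
  have h0' : ∀ m : ℕ, cosCoef f₁ m = 0 := by
    intro m
    rw [cosCoef, intervalIntegral_eq_Ioc, ← h0 m, cosCoef, intervalIntegral_eq_Ioc]
    exact integral_congr_ae (haeIoc.mono (fun x hx => by rw [hx])) |>.symm
  have hs' : ∀ m : ℕ, sinCoef f₁ m = 0 := by
    intro m
    rw [sinCoef, intervalIntegral_eq_Ioc, ← hs m, sinCoef, intervalIntegral_eq_Ioc]
    exact integral_congr_ae (haeIoc.mono (fun x hx => by rw [hx])) |>.symm
  -- integrability of f₁ on Ioc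
  have hint1 : Integrable f₁ muPi := hmem1.integrable (by norm_num)
  have hint1' : IntegrableOn f₁ (Set.Ioc (-Real.pi) Real.pi) := by
    have h := hint1
    rwa [muPi_eq] at h
  -- the lifted function
  set F : AddCircle (2*Real.pi) → ℂ :=
    AddCircle.liftIoc (2*Real.pi) (-Real.pi) (fun t => (f₁ t : ℂ)) with hF
  have hcomp : ∀ x ∈ Set.Ioc (-Real.pi) Real.pi, F ((x : ℝ) : AddCircle (2*Real.pi)) = (f₁ x : ℂ) := by
    intro x hx
    exact AddCircle.liftIoc_coe_apply (by rw [hend]; exact hx)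
  have hFsm : StronglyMeasurable F := by
    have h1 : StronglyMeasurable (fun t : ℝ => (f₁ t : ℂ)) :=
      Complex.continuous_ofReal.comp_stronglyMeasurable hsm
    have h2 : StronglyMeasurable (fun x : Set.Ioc (-Real.pi) (-Real.pi + 2*Real.pi) =>
        (f₁ (x:ℝ) : ℂ)) := h1.comp_measurable measurable_subtype_coe
    exact h2.comp_measurable (AddCircle.measurableEquivIoc (2*Real.pi) (-Real.pi)).measurable
  -- measure preserving quotient map
  have hmp := AddCircle.measurePreserving_mk (2*Real.pi) (-Real.pi)
  rw [hend] at hmp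
  -- MemLp of F
  have hmemF : MemLp F 2 (volume : Measure (AddCircle (2*Real.pi))) := by
    rw [← hmp.map_eq]
    refine (memLp_map_measure_iff hFsm.aestronglyMeasurable
      hmp.measurable.aemeasurable).2 ?_
    have hbase : MemLp (fun t => (f₁ t : ℂ)) 2 (volume.restrict (Set.Ioc (-Real.pi) Real.pi)) := by
      rw [← muPi_eq]; exact hmem1.ofReal
    refine hbase.ae_eq ?_
    rw [Filter.EventuallyEq, ae_restrict_iff' measurableSet_Ioc]
    exact Filter.Eventually.of_forall (fun x hx => (hcomp x hx).symm)
  have hmemFh : MemLp F 2 (AddCircle.haarAddCircle : Measure (AddCircle (2*Real.pi))) := by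
    have hne : ENNReal.ofReal (2*Real.pi) ≠ 0 := by
      simp [ENNReal.ofReal_eq_zero]; positivity
    have heq : (AddCircle.haarAddCircle : Measure (AddCircle (2*Real.pi)))
        = (ENNReal.ofReal (2*Real.pi))⁻¹ • (volume : Measure (AddCircle (2*Real.pi))) := by
      rw [AddCircle.volume_eq_smul_haarAddCircle, smul_smul,
        ENNReal.inv_mul_cancel hne ENNReal.ofReal_ne_top, one_smul]
    rw [heq]
    exact hmemF.smul_measure (by simp [hne, Real.pi_pos])
  -- Fourier coefficients of F vanish
  have hco : ∀ n : ℤ, fourierCoeff F n = 0 := by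
    intro n
    rw [fourierCoeff_eq_intervalIntegral F n (-Real.pi), hend]
    have hIoc : (∫ x in (-Real.pi)..Real.pi,
        (fourier (-n) ((x:ℝ) : AddCircle (2*Real.pi))) • F ((x:ℝ) : AddCircle (2*Real.pi)))
        = ∫ x in Set.Ioc (-Real.pi) Real.pi,
        (fourier (-n) ((x:ℝ) : AddCircle (2*Real.pi))) • F ((x:ℝ) : AddCircle (2*Real.pi)) :=
      intervalIntegral.integral_of_le neg_pi_lt_pi.le
    rw [hIoc]
    have hpt : ∀ x ∈ Set.Ioc (-Real.pi) Real.pi,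
        (fourier (-n) ((x:ℝ) : AddCircle (2*Real.pi))) • F ((x:ℝ) : AddCircle (2*Real.pi))
        = ((f₁ x * Real.cos ((n:ℝ)*x) : ℝ) : ℂ)
          + ((-(f₁ x * Real.sin ((n:ℝ)*x)) : ℝ) : ℂ) * Complex.I := by
      intro x hx
      rw [hcomp x hx, fourier_coe_apply]
      have harg : 2 * (Real.pi:ℂ) * Complex.I * (((-n : ℤ)):ℂ) * (x:ℂ) / ((2 * Real.pi : ℝ):ℂ)
          = ((-(n:ℝ) * x : ℝ) : ℂ) * Complex.I := by
        have hpne : (Real.pi : ℂ) ≠ 0 := by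
          exact_mod_cast Real.pi_ne_zero
        push_cast
        field_simp
      rw [harg, Complex.exp_mul_I]
      have hcos : Complex.cos ((-(n:ℝ) * x : ℝ) : ℂ) = ((Real.cos (-(n:ℝ)*x) : ℝ) : ℂ) :=
        (Complex.ofReal_cos _).symm
      have hsin : Complex.sin ((-(n:ℝ) * x : ℝ) : ℂ) = ((Real.sin (-(n:ℝ)*x) : ℝ) : ℂ) :=
        (Complex.ofReal_sin _).symm
      rw [hcos, hsin, smul_eq_mul]
      rw [show Real.cos (-(n:ℝ)*x) = Real.cos ((n:ℝ)*x) by rw [neg_mul, Real.cos_neg],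
        show Real.sin (-(n:ℝ)*x) = -Real.sin ((n:ℝ)*x) by rw [neg_mul, Real.sin_neg]]
      push_cast
      ring
    rw [setIntegral_congr_fun measurableSet_Ioc hpt]
    have hic : IntegrableOn (fun x => ((f₁ x * Real.cos ((n:ℝ)*x) : ℝ) : ℂ))
        (Set.Ioc (-Real.pi) Real.pi) := by
      refine Integrable.ofReal ?_
      exact Integrable.bdd_mul (c := 1) hint1'
        (contCosK ((n:ℝ))).aestronglyMeasurable.restrict
        (Filter.Eventually.of_forall (fun x => by
          rw [Real.norm_eq_abs]; exact Real.abs_cos_le_one _)) |>.congr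
        (Filter.Eventually.of_forall (fun x => mul_comm _ _))
    have his : IntegrableOn (fun x => ((-(f₁ x * Real.sin ((n:ℝ)*x)) : ℝ) : ℂ) * Complex.I)
        (Set.Ioc (-Real.pi) Real.pi) := by
      refine Integrable.mul_const ?_ _
      refine Integrable.ofReal ?_
      refine Integrable.neg ?_
      exact Integrable.bdd_mul (c := 1) hint1'
        (contSinK ((n:ℝ))).aestronglyMeasurable.restrict
        (Filter.Eventually.of_forall (fun x => by
          rw [Real.norm_eq_abs]; exact Real.abs_sin_le_one _)) |>.congr
        (Filter.Eventually.of_forall (fun x => mul_comm _ _))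
    rw [MeasureTheory.integral_add hic his, MeasureTheory.integral_mul_const]
    have e1 : (∫ x in Set.Ioc (-Real.pi) Real.pi, ((f₁ x * Real.cos ((n:ℝ)*x) : ℝ) : ℂ))
        = (((∫ x in Set.Ioc (-Real.pi) Real.pi, f₁ x * Real.cos ((n:ℝ)*x)) : ℝ) : ℂ) :=
      integral_ofReal
    have e2 : (∫ x in Set.Ioc (-Real.pi) Real.pi, ((-(f₁ x * Real.sin ((n:ℝ)*x)) : ℝ) : ℂ))
        = (((∫ x in Set.Ioc (-Real.pi) Real.pi, -(f₁ x * Real.sin ((n:ℝ)*x))) : ℝ) : ℂ) :=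
      integral_ofReal
    have e3 : (∫ x in Set.Ioc (-Real.pi) Real.pi, -(f₁ x * Real.sin ((n:ℝ)*x))) = 0 := by
      rw [MeasureTheory.integral_neg, intIoc_sin_int f₁ hs' n, neg_zero]
    rw [e1, e2, e3, intIoc_cos_int f₁ h0' n]
    simp
  -- conclude F = 0 a.e.
  set Flp := hmemFh.toLp F with hFlp
  have hrepr : ∀ i : ℤ, (fourierBasis.repr Flp : ℤ → ℂ) i = 0 := by
    intro i
    rw [fourierBasis_repr]
    have hcoe : (Flp : AddCircle (2*Real.pi) → ℂ) =ᵐ[AddCircle.haarAddCircle] F :=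
      hmemFh.coeFn_toLp
    have : fourierCoeff (Flp : AddCircle (2*Real.pi) → ℂ) i = fourierCoeff F i := by
      rw [fourierCoeff, fourierCoeff]
      exact integral_congr_ae (hcoe.mono (fun x hx => by simp only []; rw [hx]))
    rw [this, hco]
  have hFlp0 : Flp = 0 := by
    rw [← (fourierBasis (T := 2*Real.pi)).repr.map_eq_zero_iff]
    apply lp.ext
    funext i
    rw [hrepr i]
    simp
  have hF0 : F =ᵐ[(AddCircle.haarAddCircle : Measure (AddCircle (2*Real.pi)))] 0 := by
    have h1 : (Flp : AddCircle (2*Real.pi) → ℂ) =ᵐ[AddCircle.haarAddCircle] F :=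
      hmemFh.coeFn_toLp
    have h2 : (Flp : AddCircle (2*Real.pi) → ℂ)
        =ᵐ[(AddCircle.haarAddCircle : Measure (AddCircle (2*Real.pi)))] 0 := by
      rw [hFlp0]
      exact Lp.coeFn_zero _ _ _
    exact h1.symm.trans h2
  have hF0v : F =ᵐ[(volume : Measure (AddCircle (2*Real.pi)))] 0 := by
    rw [AddCircle.volume_eq_smul_haarAddCircle]
    exact Measure.ae_smul_measure hF0 _
  have hpull : F ∘ (QuotientAddGroup.mk : ℝ → AddCircle (2*Real.pi))
      =ᵐ[volume.restrict (Set.Ioc (-Real.pi) Real.pi)]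
      (0 : AddCircle (2*Real.pi) → ℂ) ∘ (QuotientAddGroup.mk : ℝ → AddCircle (2*Real.pi)) :=
    hmp.quasiMeasurePreserving.ae_eq_comp hF0v
  have hf₁0 : ∀ᵐ x ∂(volume.restrict (Set.Ioc (-Real.pi) Real.pi)), f₁ x = 0 := by
    have hmem : ∀ᵐ x ∂(volume.restrict (Set.Ioc (-Real.pi) Real.pi)),
        x ∈ Set.Ioc (-Real.pi) Real.pi := by
      rw [ae_restrict_iff' measurableSet_Ioc]
      exact Filter.Eventually.of_forall (fun x hx => hx)
    filter_upwards [hpull, hmem] with x hx hxm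
    have : (f₁ x : ℂ) = 0 := by
      rw [← hcomp x hxm]
      exact hx
    exact_mod_cast this
  rw [muPi_eq]
  have hf0 : f =ᵐ[volume.restrict (Set.Ioc (-Real.pi) Real.pi)] f₁ := haeIoc
  filter_upwards [hf0, hf₁0] with x h1 h2
  rw [h1, h2]

end unique

section transfer

lemma memℒp_of_continuous {v : ℝ → ℝ} (hv : Continuous v) : MemLp v 2 muPi := by
  haveI := isFiniteMuPi
  obtain ⟨C, hC⟩ := (isCompact_Icc (a := -Real.pi) (b := Real.pi)).exists_bound_of_continuousOn
    hv.continuousOn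
  refine MemLp.of_bound hv.aestronglyMeasurable.restrict C ?_
  rw [muPi, ae_restrict_iff' measurableSet_Ioo]
  exact Filter.Eventually.of_forall (fun x hx => hC x ⟨hx.1.le, hx.2.le⟩)

lemma periodic_ext {v w : ℝ → ℝ} (hv : Continuous v) (hw : Continuous w)
    (hpv : Function.Periodic v (2*Real.pi)) (hpw : Function.Periodic w (2*Real.pi))
    (h : ∀ᵐ t ∂muPi, v t = w t) : ∀ t, v t = w t := by
  have hIcc : ∀ t ∈ Set.Icc (-Real.pi) Real.pi, v t = w t := by
    have hclosed : IsClosed {t | v t = w t} := isClosed_eq hv hw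
    have hIoo : Set.Ioo (-Real.pi) Real.pi ⊆ {t | v t = w t} := by
      by_contra hc
      rw [Set.subset_def] at hc
      push_neg at hc
      obtain ⟨x, hx, hne⟩ := hc
      have hUopen : IsOpen ({t | v t = w t}ᶜ ∩ Set.Ioo (-Real.pi) Real.pi) :=
        hclosed.isOpen_compl.inter isOpen_Ioo
      have hUne : ({t | v t = w t}ᶜ ∩ Set.Ioo (-Real.pi) Real.pi).Nonempty := ⟨x, hne, hx⟩
      have hpos := hUopen.measure_pos volume hUne
      have h0 : muPi ({t | v t = w t}ᶜ) = 0 := ae_iff.mp h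
      rw [muPi, Measure.restrict_apply hclosed.measurableSet.compl] at h0
      exact absurd h0 hpos.ne'
    have hsub := hclosed.closure_subset_iff.2 hIoo
    rw [closure_Ioo (by linarith [Real.pi_pos] : -Real.pi ≠ Real.pi)] at hsub
    exact fun t ht => hsub ht
  intro t
  have hp2 : (0:ℝ) < 2*Real.pi := by positivity
  have hmem := toIcoMod_mem_Ico hp2 (-Real.pi) t
  have hmem' : toIcoMod hp2 (-Real.pi) t ∈ Set.Icc (-Real.pi) Real.pi := by
    refine ⟨hmem.1, ?_⟩
    have h2 := hmem.2
    have : -Real.pi + 2*Real.pi = Real.pi := by ring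
    rw [this] at h2
    exact h2.le
  have ev : v (toIcoMod hp2 (-Real.pi) t) = v t := hpv.sub_zsmul_eq _
  have ew : w (toIcoMod hp2 (-Real.pi) t) = w t := hpw.sub_zsmul_eq _
  rw [← ev, ← ew]
  exact hIcc _ hmem'

lemma periodic_c_cos (c : ℝ) (n : ℕ) :
    Function.Periodic (fun t => c * Real.cos ((n:ℝ)*t)) (2*Real.pi) := by
  intro x
  have e : (n:ℝ)*(x + 2*Real.pi) = (n:ℝ)*x + (n:ℤ)*(2*Real.pi) := by push_cast; ring
  simp only [e, Real.cos_add_int_mul_two_pi]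

lemma periodic_c_sin (c : ℝ) (n : ℕ) :
    Function.Periodic (fun t => c * Real.sin ((n:ℝ)*t)) (2*Real.pi) := by
  intro x
  have e : (n:ℝ)*(x + 2*Real.pi) = (n:ℝ)*x + (n:ℤ)*(2*Real.pi) := by push_cast; ring
  simp only [e, Real.sin_add_int_mul_two_pi]

lemma coef_lin (g v ψ : ℝ → ℝ) (a : ℝ) (hg : IntegrableOn g (Set.Ioc (-Real.pi) Real.pi))
    (hv : Continuous v) (hψ : Continuous ψ) (hbd : ∀ x, ‖ψ x‖ ≤ 1) :
    ∫ t in (-Real.pi)..Real.pi, (a * g t - v t) * ψ t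
      = a * (∫ t in (-Real.pi)..Real.pi, g t * ψ t)
        - ∫ t in (-Real.pi)..Real.pi, v t * ψ t := by
  have hgψ : IntegrableOn (fun t => g t * ψ t) (Set.Ioc (-Real.pi) Real.pi) :=
    (Integrable.bdd_mul (c := 1) hg hψ.aestronglyMeasurable.restrict (Filter.Eventually.of_forall hbd)).congr
      (Filter.Eventually.of_forall (fun x => mul_comm _ _))
  have hvψ : IntegrableOn (fun t => v t * ψ t) (Set.Ioc (-Real.pi) Real.pi) :=
    (hv.mul hψ).integrableOn_Ioc
  rw [intervalIntegral_eq_Ioc, intervalIntegral_eq_Ioc, intervalIntegral_eq_Ioc]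
  rw [show (fun t => (a * g t - v t) * ψ t)
      = (fun t => a * (g t * ψ t) - v t * ψ t) from funext (fun t => by ring)]
  rw [MeasureTheory.integral_sub (hgψ.const_mul a) hvψ, MeasureTheory.integral_const_mul]

end transfer


lemma cosCoef_cosn (n m : ℕ) : cosCoef (fun t => Real.cos ((n:ℝ)*t)) m
    = if n = m then (if n = 0 then 2*Real.pi else Real.pi) else 0 := cosMulCos n m

lemma sinCoef_cosn (n m : ℕ) : sinCoef (fun t => Real.cos ((n:ℝ)*t)) m = 0 := cosMulSin n m

lemma cosCoef_lin (g v : ℝ → ℝ) (a : ℝ) (hg : IntegrableOn g (Set.Ioc (-Real.pi) Real.pi))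
    (hv : Continuous v) (m : ℕ) :
    cosCoef (fun t => a * g t - v t) m = a * cosCoef g m - cosCoef v m := by
  have e : cosCoef (fun t => a * g t - v t) m
      = ∫ t in (-Real.pi)..Real.pi, (a * g t - v t) * Real.cos ((m:ℝ)*t) := rfl
  rw [e, coef_lin g v (fun t => Real.cos ((m:ℝ)*t)) a hg hv (contCosK _)
    (fun x => by rw [Real.norm_eq_abs]; exact Real.abs_cos_le_one _)]
  rfl

lemma sinCoef_lin (g v : ℝ → ℝ) (a : ℝ) (hg : IntegrableOn g (Set.Ioc (-Real.pi) Real.pi))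
    (hv : Continuous v) (m : ℕ) :
    sinCoef (fun t => a * g t - v t) m = a * sinCoef g m - sinCoef v m := by
  have e : sinCoef (fun t => a * g t - v t) m
      = ∫ t in (-Real.pi)..Real.pi, (a * g t - v t) * Real.sin ((m:ℝ)*t) := rfl
  rw [e, coef_lin g v (fun t => Real.sin ((m:ℝ)*t)) a hg hv (contSinK _)
    (fun x => by rw [Real.norm_eq_abs]; exact Real.abs_sin_le_one _)]
  rfl

lemma solution_coefs {r μ : ℝ} {v v' g : ℝ → ℝ} (hH : InH0 v v') (hB : IsBr r v' g)
    (heq : ∀ᵐ t ∂muPi, μ * g t = v t) :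
    cosCoef v 0 = 0 ∧
    (∀ m : ℕ, 1 ≤ m → (1 - μ * ((m:ℝ) * brMult r m)) * cosCoef v m = 0) := by
  have heq' : ∀ᵐ t ∂(volume.restrict (Set.Ioc (-Real.pi) Real.pi)), μ * g t = v t := by
    rw [← muPi_eq]; exact heq
  have hrel : ∀ m : ℕ, cosCoef v m = μ * cosCoef g m := by
    intro m
    rw [cosCoef, cosCoef, intervalIntegral_eq_Ioc, intervalIntegral_eq_Ioc,
      ← MeasureTheory.integral_const_mul]
    refine (integral_congr_ae (heq'.mono (fun x hx => ?_))).symm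
    rw [← hx]
    ring
  constructor
  · rw [hrel 0, hB.2.1, mul_zero]
  · intro m hm
    have h1 : cosCoef g m = (brMult r m) * ((m:ℝ) * cosCoef v m) := by
      rw [hB.2.2.1 m hm, sinCoef_parts hH hm]
      ring
    have h2 := hrel m
    rw [h1] at h2
    linear_combination h2

lemma sinCoef_g_zero {r : ℝ} {v v' g : ℝ → ℝ} (hH : InH0 v v') (hB : IsBr r v' g) :
    ∀ m : ℕ, sinCoef g m = 0 := by
  intro m
  rcases Nat.eq_zero_or_pos m with rfl | hm
  · rw [sinCoef]
    simp
  · rw [hB.2.2.2 m hm, cosCoef_parts hH hm, mul_zero]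

lemma g_ae_eq {r : ℝ} (hr : r ∈ Set.Ico (0:ℝ) 1) {n : ℕ} (hn : 1 ≤ n) {v v' g : ℝ → ℝ} {c : ℝ}
    (hH : InH0 v v') (hB : IsBr r v' g) (hv : ∀ t, v t = c * Real.cos ((n:ℝ)*t)) :
    ∀ᵐ t ∂muPi, muN r n * g t = v t := by
  haveI := isFiniteMuPi
  have hveq : v = fun t => c * Real.cos ((n:ℝ)*t) := funext hv
  have hvcos : ∀ m : ℕ, cosCoef v m
      = c * (if n = m then (if n = 0 then 2*Real.pi else Real.pi) else 0) :=
    fun m => by rw [hveq]; exact cosCoef_cos c n m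
  have hvsin : ∀ m : ℕ, sinCoef v m = 0 := fun m => by rw [hveq]; exact sinCoef_cos c n m
  have hgI : IntegrableOn g (Set.Ioc (-Real.pi) Real.pi) := by
    have h := hB.1.integrable (by norm_num)
    rwa [muPi_eq] at h
  have hvcont : Continuous v := by rw [hveq]; exact continuous_const.mul (contCosK _)
  have hmemh : MemLp (fun t => muN r n * g t - v t) 2 muPi :=
    (hB.1.const_mul _).sub (memℒp_of_continuous hvcont)
  have hhcos : ∀ m : ℕ, cosCoef (fun t => muN r n * g t - v t) m = 0 := by
    intro m
    rw [cosCoef_lin g v (muN r n) hgI hvcont m]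
    rcases Nat.eq_zero_or_pos m with rfl | hm
    · rw [hB.2.1, hvcos 0, if_neg (by omega)]
      ring
    · rw [hB.2.2.1 m hm, sinCoef_parts hH hm, hvcos m]
      rcases eq_or_ne n m with rfl | hnm
      · rw [if_pos rfl, if_neg (by omega)]
        have hmb := muN_mul_brMult hr hn
        linear_combination (c * Real.pi) * hmb
      · rw [if_neg hnm]
        ring
  have hhsin : ∀ m : ℕ, sinCoef (fun t => muN r n * g t - v t) m = 0 := by
    intro m
    rw [sinCoef_lin g v (muN r n) hgI hvcont m, sinCoef_g_zero hH hB m, hvsin m]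
    ring
  have hu := fourier_unique hmemh hhcos hhsin
  filter_upwards [hu] with t ht
  have ht' : muN r n * g t - v t = 0 := ht
  linarith

lemma inH0_example {n : ℕ} (hn : 1 ≤ n) :
    InH0 (fun t => Real.cos ((n:ℝ)*t)) (fun t => -(n:ℝ) * Real.sin ((n:ℝ)*t)) := by
  have hne : (n:ℝ) ≠ 0 := Nat.cast_ne_zero.2 (by omega)
  refine ⟨?_, ?_, ?_, ?_, ?_, ?_⟩
  · intro t
    show Real.cos ((n:ℝ)*(-t)) = Real.cos ((n:ℝ)*t)
    rw [mul_neg, Real.cos_neg]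
  · intro x
    show Real.cos ((n:ℝ)*(x + 2*Real.pi)) = Real.cos ((n:ℝ)*x)
    have e : (n:ℝ)*(x + 2*Real.pi) = (n:ℝ)*x + (n:ℤ)*(2*Real.pi) := by push_cast; ring
    rw [e, Real.cos_add_int_mul_two_pi]
  · intro x
    show -(n:ℝ) * Real.sin ((n:ℝ)*(x + 2*Real.pi)) = -(n:ℝ) * Real.sin ((n:ℝ)*x)
    have e : (n:ℝ)*(x + 2*Real.pi) = (n:ℝ)*x + (n:ℤ)*(2*Real.pi) := by push_cast; ring
    rw [e, Real.sin_add_int_mul_two_pi]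
  · exact memℒp_of_continuous (continuous_const.mul (contSinK _))
  · intro a b
    exact (continuous_const.mul (contSinK _)).intervalIntegrable _ _
  · intro a b
    show Real.cos ((n:ℝ)*b) - Real.cos ((n:ℝ)*a) = _
    rw [intervalIntegral.integral_const_mul,
      intervalIntegral.integral_comp_mul_left (fun s => Real.sin s) hne, integral_sin,
      smul_eq_mul]
    field_simp
    ring

lemma isBr_example {r : ℝ} (hr : r ∈ Set.Ico (0:ℝ) 1) {n : ℕ} (hn : 1 ≤ n) :
    IsBr r (fun t => -(n:ℝ) * Real.sin ((n:ℝ)*t))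
      (fun t => ((n:ℝ) * brMult r n) * Real.cos ((n:ℝ)*t)) := by
  refine ⟨memℒp_of_continuous (continuous_const.mul (contCosK _)), ?_, ?_, ?_⟩
  · rw [cosCoef_cos ((n:ℝ) * brMult r n) n 0, if_neg (by omega), mul_zero]
  · intro m hm
    rw [cosCoef_cos ((n:ℝ) * brMult r n) n m, sinCoef_sin (-(n:ℝ)) n m]
    rcases eq_or_ne n m with rfl | hnm
    · rw [if_pos rfl, if_pos rfl, if_neg (by omega), if_neg (by omega)]
      ring
    · rw [if_neg hnm, if_neg hnm]
      ring
  · intro m hm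
    rw [sinCoef_cos ((n:ℝ) * brMult r n) n m, cosCoef_sin (-(n:ℝ)) n m, mul_zero]


/-- **The linearised operator at the bifurcation points.** For `r ∈ [0,1)` and `μ ∈ ℝ`:
a nonzero `v ∈ Ĥ₀` with `μ·𝔅_r(v') = v` a.e. on `(−π,π)` exists iff `μ = μ_n(r)` for some
`n ≥ 1`; and for `μ = μ_n(r)` the set of solutions `v ∈ Ĥ₀` of `μ_n(r)·𝔅_r(v') = v` is exactly
the one-dimensional space `{c·cos(n·) : c ∈ ℝ}`. -/
theorem babenko_linearisation_kernel (r : ℝ) (hr : r ∈ Set.Ico (0 : ℝ) 1) :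
    (∀ μ : ℝ,
      ((∃ v v' g : ℝ → ℝ, InH0 v v' ∧ IsBr r v' g ∧ (∃ t : ℝ, v t ≠ 0) ∧
          ∀ᵐ t ∂muPi, μ * g t = v t)
        ↔ ∃ n : ℕ, 1 ≤ n ∧ μ = muN r n)) ∧
    (∀ n : ℕ, 1 ≤ n → ∀ v v' : ℝ → ℝ, InH0 v v' → ∀ g : ℝ → ℝ, IsBr r v' g →
      ((∀ᵐ t ∂muPi, muN r n * g t = v t) ↔ ∃ c : ℝ, ∀ t : ℝ, v t = c * Real.cos (n * t))) := by

  constructor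
  · intro μ
    constructor
    · rintro ⟨v, v', g, hH, hB, ⟨t₀, ht₀⟩, heq⟩
      by_contra hc
      push_neg at hc
      obtain ⟨h0, hcs⟩ := solution_coefs hH hB heq
      have hcos0 : ∀ m : ℕ, cosCoef v m = 0 := by
        intro m
        rcases Nat.eq_zero_or_pos m with rfl | hm
        · exact h0
        · have hfac : (1 - μ * ((m:ℝ) * brMult r m)) ≠ 0 := by
            intro hzero
            have h1 : μ * ((m:ℝ) * brMult r m) = 1 := by linarith
            exact hc m hm ((eq_muN_iff hr hm).1 h1)
          rcases mul_eq_zero.1 (hcs m hm) with h | h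
          · exact absurd h hfac
          · exact h
      have hu := fourier_unique (memℒp_of_continuous (v_cont hH)) hcos0
        (fun m => sinCoef_even hH.1 m)
      have hzero := periodic_ext (v_cont hH) continuous_const hH.2.1
        (fun x => rfl : Function.Periodic (fun _ : ℝ => (0:ℝ)) (2*Real.pi)) hu
      exact ht₀ (hzero t₀)
    · rintro ⟨n, hn, rfl⟩
      refine ⟨(fun t => Real.cos ((n:ℝ)*t)), (fun t => -(n:ℝ) * Real.sin ((n:ℝ)*t)),
        (fun t => ((n:ℝ) * brMult r n) * Real.cos ((n:ℝ)*t)),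
        inH0_example hn, isBr_example hr hn, ⟨0, by norm_num⟩, ?_⟩
      refine Filter.Eventually.of_forall (fun t => ?_)
      show muN r n * (((n:ℝ) * brMult r n) * Real.cos ((n:ℝ)*t)) = Real.cos ((n:ℝ)*t)
      linear_combination (Real.cos ((n:ℝ)*t)) * (muN_mul_brMult hr hn)
  · intro n hn v v' hH g hB
    constructor
    · intro heq
      obtain ⟨h0, hcs⟩ := solution_coefs hH hB heq
      refine ⟨cosCoef v n / Real.pi, ?_⟩
      set c := cosCoef v n / Real.pi with hcdef
      have hπ : Real.pi ≠ 0 := Real.pi_ne_zero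
      have hvcont := v_cont hH
      have hcos0 : ∀ m : ℕ, m ≠ n → cosCoef v m = 0 := by
        intro m hmn
        rcases Nat.eq_zero_or_pos m with rfl | hm
        · exact h0
        · have hfac : (1 - muN r n * ((m:ℝ) * brMult r m)) ≠ 0 := by
            intro hzero
            have h1 : muN r n * ((m:ℝ) * brMult r m) = 1 := by linarith
            exact hmn (muN_inj hr hm hn ((eq_muN_iff hr hm).1 h1).symm)
          rcases mul_eq_zero.1 (hcs m hm) with h | h
          · exact absurd h hfac
          · exact h
      have hwcos : ∀ m : ℕ, cosCoef (fun t => c * Real.cos ((n:ℝ)*t) - v t) m = 0 := by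
        intro m
        rw [cosCoef_lin (fun t => Real.cos ((n:ℝ)*t)) v c ((contCosK _).integrableOn_Ioc)
          hvcont m, cosCoef_cosn n m]
        rcases eq_or_ne m n with rfl | hmn
        · rw [if_pos rfl, if_neg (by omega), hcdef]
          field_simp
          ring
        · rw [if_neg (fun h => hmn h.symm), hcos0 m hmn]
          ring
      have hwsin : ∀ m : ℕ, sinCoef (fun t => c * Real.cos ((n:ℝ)*t) - v t) m = 0 := by
        intro m
        rw [sinCoef_lin (fun t => Real.cos ((n:ℝ)*t)) v c ((contCosK _).integrableOn_Ioc)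
          hvcont m, sinCoef_cosn n m, sinCoef_even hH.1 m]
        ring
      have hwmem : MemLp (fun t => c * Real.cos ((n:ℝ)*t) - v t) 2 muPi :=
        (memℒp_of_continuous (continuous_const.mul (contCosK _))).sub
          (memℒp_of_continuous hvcont)
      have hu := fourier_unique hwmem hwcos hwsin
      have hae : ∀ᵐ t ∂muPi, (fun t => c * Real.cos ((n:ℝ)*t)) t = v t := by
        filter_upwards [hu] with t ht
        have ht' : c * Real.cos ((n:ℝ)*t) - v t = 0 := ht
        show c * Real.cos ((n:ℝ)*t) = v t
        linarith
      have := periodic_ext (continuous_const.mul (contCosK _)) hvcont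
        (periodic_c_cos c n) hH.2.1 hae
      exact fun t => (this t).symm
    · rintro ⟨c, hv⟩
      exact g_ae_eq hr hn hH hB hv
end
end

section
/- Let r ∈ [0,1), let a_0 ∈ ℝ and let (a_k)_{k≥1} be real numbers with Σ_{k≥1} k|a_k| < ∞. Define x(t) = −t − Σ_{k=1}^∞ a_k (1+r^{2k}) sin(kt) and η(t) = −a_0 + Σ_{k=1}^∞ a_k (1−r^{2k}) cos(kt). Then ∫_{−π}^{π} η(t) x'(t) dt = 2π a_0 − π Σ_{k=1}^∞ k a_k² (1−r^{4k}); in particular ∫_{−π}^{π} η(t) x'(t) dt = 0 if and only if a_0 = (1/2) Σ_{k=1}^∞ k a_k² (1−r^{4k}). (This is the zero-mean condition for the free-surface profile in terms of the coefficients of the conformal parametrisation.) -/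
open MeasureTheory Real Set Filter Topology

noncomputable section


open intervalIntegral in
lemma zmc_cos_int (m : ℤ) (hm : m ≠ 0) :
    ∫ t in (-Real.pi)..Real.pi, Real.cos ((m : ℝ) * t) = 0 := by
  have hm' : (m : ℝ) ≠ 0 := Int.cast_ne_zero.mpr hm
  rw [show (fun t : ℝ => Real.cos ((m:ℝ) * t)) = fun t => Real.cos ((m:ℝ)*t) from rfl]
  rw [integral_comp_mul_left Real.cos hm', integral_cos]
  have h1 : Real.sin ((m : ℝ) * Real.pi) = 0 := Real.sin_int_mul_pi m
  have h2 : Real.sin ((m : ℝ) * -Real.pi) = 0 := by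
    rw [mul_neg, Real.sin_neg, h1, neg_zero]
  simp [h1, h2]

open intervalIntegral in
lemma zmc_ortho (m n : ℕ) :
    ∫ t in (-Real.pi)..Real.pi,
      Real.cos (((m : ℝ) + 1) * t) * Real.cos (((n : ℝ) + 1) * t) =
      if m = n then Real.pi else 0 := by
  have key : ∀ t : ℝ, Real.cos (((m : ℝ) + 1) * t) * Real.cos (((n : ℝ) + 1) * t)
      = (Real.cos ((((m : ℝ) - n)) * t) + Real.cos ((((m : ℝ) + n + 2)) * t)) / 2 := by
    intro t
    have := Real.cos_sub ((((m : ℝ) + 1)) * t) ((((n : ℝ) + 1)) * t)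
    have h2 := Real.cos_add ((((m : ℝ) + 1)) * t) ((((n : ℝ) + 1)) * t)
    have e1 : (((m : ℝ) + 1)) * t - (((n : ℝ) + 1)) * t = ((m : ℝ) - n) * t := by ring
    have e2 : (((m : ℝ) + 1)) * t + (((n : ℝ) + 1)) * t = ((m : ℝ) + n + 2) * t := by ring
    rw [e1] at this; rw [e2] at h2
    nlinarith [this, h2, Real.sin_sq_add_cos_sq ((((m:ℝ)+1))*t)]
  simp_rw [key]
  have hint1 : IntervalIntegrable (fun t => Real.cos (((m : ℝ) - n) * t)) volume (-Real.pi) Real.pi :=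
    (Real.continuous_cos.comp (continuous_const.mul continuous_id)).intervalIntegrable _ _
  have hint2 : IntervalIntegrable (fun t => Real.cos (((m : ℝ) + n + 2) * t)) volume (-Real.pi) Real.pi :=
    (Real.continuous_cos.comp (continuous_const.mul continuous_id)).intervalIntegrable _ _
  rw [intervalIntegral.integral_div, integral_add hint1 hint2]
  have hI2 : ∫ t in (-Real.pi)..Real.pi, Real.cos (((m : ℝ) + n + 2) * t) = 0 := by
    have : ((m : ℝ) + n + 2) = ((m + n + 2 : ℤ) : ℝ) := by push_cast; ring
    rw [this]; exact zmc_cos_int _ (by omega)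
  by_cases h : m = n
  · subst h
    have : ((m : ℝ) - m) = 0 := by ring
    rw [this, hI2, if_pos rfl]
    simp only [zero_mul, Real.cos_zero, intervalIntegral.integral_const, smul_eq_mul, mul_one,
      add_zero, sub_neg_eq_add]
    ring
  · have : ((m : ℝ) - n) = ((m - n : ℤ) : ℝ) := by push_cast; ring
    rw [this, hI2, zmc_cos_int _ (by omega), if_neg h]
    norm_num

open intervalIntegral in
lemma zmc_swap (c : ℕ → ℝ) (hc : Summable fun k => |c k|) (ψ : ℕ → ℝ → ℝ)
    (hψc : ∀ k, Continuous (ψ k)) (M : ℝ) (hψb : ∀ k t, |ψ k t| ≤ M) :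
    ∫ t in (-Real.pi)..Real.pi, ∑' k, c k * ψ k t
      = ∑' k, c k * ∫ t in (-Real.pi)..Real.pi, ψ k t := by
  have hle : -Real.pi ≤ Real.pi := by linarith [Real.pi_pos]
  have hM : 0 ≤ M := le_trans (abs_nonneg _) (hψb 0 0)
  have hμ : (volume (Ioc (-Real.pi) Real.pi)).toReal = 2 * Real.pi := by
    rw [Real.volume_Ioc, ENNReal.toReal_ofReal (by linarith)]; ring
  have hint : ∀ k, Integrable (fun t => c k * ψ k t)
      (volume.restrict (Ioc (-Real.pi) Real.pi)) := by
    intro k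
    exact (continuous_const.mul (hψc k)).integrableOn_Ioc
  have hsum : Summable fun k =>
      ∫ t in Ioc (-Real.pi) Real.pi, ‖c k * ψ k t‖ := by
    apply Summable.of_nonneg_of_le
      (fun k => integral_nonneg (fun t => norm_nonneg _))
      (fun k => ?_) (hc.mul_right (M * (2 * Real.pi)))
    have hle2 : ∀ t, ‖c k * ψ k t‖ ≤ |c k| * M := by
      intro t
      rw [Real.norm_eq_abs, abs_mul]
      exact mul_le_mul_of_nonneg_left (hψb k t) (abs_nonneg _)
    calc ∫ t in Ioc (-Real.pi) Real.pi, ‖c k * ψ k t‖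
        ≤ ∫ _t in Ioc (-Real.pi) Real.pi, |c k| * M := by
          apply integral_mono (hint k).norm _ hle2
          exact integrableOn_const measure_Ioc_lt_top.ne
      _ = |c k| * (M * (2 * Real.pi)) := by
          rw [setIntegral_const, smul_eq_mul, measureReal_def, hμ]; ring
  rw [intervalIntegral.integral_of_le hle,
    ← MeasureTheory.integral_tsum_of_summable_integral_norm hint hsum]
  refine tsum_congr fun k => ?_
  rw [MeasureTheory.integral_const_mul, intervalIntegral.integral_of_le hle]


/-- **Zero-mean condition for the free-surface profile.** Let `r ∈ [0,1)`, `a₀ ∈ ℝ` and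
`(a_k)_{k≥1}` with `Σ k|a_k| < ∞`. For the parametrisation
`x(t) = −t − Σ a_k (1+r^(2k)) sin(kt)`, `η(t) = −a₀ + Σ a_k (1−r^(2k)) cos(kt)`
of the free surface one has `x'(t) = −1 − Σ k a_k (1+r^(2k)) cos(kt)` and
`∫_{−π}^{π} η x' dt = 2π a₀ − π Σ k a_k² (1−r^(4k))`; in particular the integral vanishes
iff `a₀ = (1/2) Σ k a_k² (1−r^(4k))`. -/
theorem zero_mean_condition (r : ℝ) (hr : r ∈ Set.Ico (0 : ℝ) 1)
    (a₀ : ℝ) (a : ℕ → ℝ)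
    (ha : Summable (fun k : ℕ => ((k : ℝ) + 1) * |a (k + 1)|))
    (x η xd : ℝ → ℝ)
    (hx : ∀ t : ℝ, x t = -t - ∑' k : ℕ, a (k + 1) * (1 + r ^ (2 * (k + 1))) *
      Real.sin ((k + 1) * t))
    (hη : ∀ t : ℝ, η t = -a₀ + ∑' k : ℕ, a (k + 1) * (1 - r ^ (2 * (k + 1))) *
      Real.cos ((k + 1) * t))
    (hxd : ∀ t : ℝ, xd t = -1 - ∑' k : ℕ, ((k : ℝ) + 1) * a (k + 1) * (1 + r ^ (2 * (k + 1))) *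
      Real.cos ((k + 1) * t)) :
    (∀ t : ℝ, HasDerivAt x (xd t) t) ∧
    (∫ t in (-Real.pi)..Real.pi, η t * xd t) =
      2 * Real.pi * a₀ - Real.pi * ∑' k : ℕ, ((k : ℝ) + 1) * (a (k + 1)) ^ 2 *
        (1 - r ^ (4 * (k + 1))) ∧
    ((∫ t in (-Real.pi)..Real.pi, η t * xd t) = 0 ↔
      a₀ = (1 / 2) * ∑' k : ℕ, ((k : ℝ) + 1) * (a (k + 1)) ^ 2 * (1 - r ^ (4 * (k + 1)))) := by
  obtain ⟨hr0, hr1⟩ := hr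
  have hrp : ∀ n : ℕ, 0 ≤ r ^ n := fun n => pow_nonneg hr0 n
  have hrle : ∀ n : ℕ, r ^ n ≤ 1 := fun n => pow_le_one₀ hr0 hr1.le
  set B : ℕ → ℝ := fun k => a (k + 1) * (1 - r ^ (2 * (k + 1))) with hBdef
  set C : ℕ → ℝ := fun k => ((k : ℝ) + 1) * a (k + 1) * (1 + r ^ (2 * (k + 1))) with hCdef
  -- summability
  have hBs : Summable fun k => |B k| := by
    apply Summable.of_nonneg_of_le (fun k => abs_nonneg _) (fun k => ?_) ha
    rw [hBdef]
    simp only [abs_mul]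
    calc |a (k + 1)| * |1 - r ^ (2 * (k + 1))| ≤ |a (k + 1)| * 1 := by
          apply mul_le_mul_of_nonneg_left _ (abs_nonneg _)
          rw [abs_le]; constructor <;> nlinarith [hrp (2 * (k + 1)), hrle (2 * (k + 1))]
      _ ≤ ((k : ℝ) + 1) * |a (k + 1)| := by
          rw [mul_one]
          exact le_mul_of_one_le_left (abs_nonneg _) (by simp)
  have hCs : Summable fun k => |C k| := by
    apply Summable.of_nonneg_of_le (fun k => abs_nonneg _) (fun k => ?_) (ha.mul_left 2)
    rw [hCdef]
    simp only [abs_mul]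
    have h1 : |((k : ℝ) + 1)| = (k : ℝ) + 1 := abs_of_nonneg (by positivity)
    have h2 : |1 + r ^ (2 * (k + 1))| ≤ 2 := by
      rw [abs_le]; constructor <;> nlinarith [hrp (2 * (k + 1)), hrle (2 * (k + 1))]
    rw [h1]
    calc ((k : ℝ) + 1) * |a (k + 1)| * |1 + r ^ (2 * (k + 1))|
        ≤ ((k : ℝ) + 1) * |a (k + 1)| * 2 := by
          apply mul_le_mul_of_nonneg_left h2 (by positivity)
      _ = 2 * (((k : ℝ) + 1) * |a (k + 1)|) := by ring
  -- rewritten forms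
  have hη' : ∀ t : ℝ, η t = -a₀ + ∑' k, B k * Real.cos (((k : ℝ) + 1) * t) := by
    intro t; rw [hη t]
  have hxd' : ∀ t : ℝ, xd t = -1 - ∑' k, C k * Real.cos (((k : ℝ) + 1) * t) := by
    intro t; rw [hxd t]
  -- part 1 : derivative
  have hderiv : ∀ t : ℝ, HasDerivAt x (xd t) t := by
    intro t
    set g : ℕ → ℝ → ℝ := fun k s => a (k + 1) * (1 + r ^ (2 * (k + 1))) *
      Real.sin (((k : ℝ) + 1) * s) with hg_def
    set g' : ℕ → ℝ → ℝ := fun k s => ((k : ℝ) + 1) * a (k + 1) * (1 + r ^ (2 * (k + 1))) *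
      Real.cos (((k : ℝ) + 1) * s) with hg'_def
    have hu : Summable fun k : ℕ => 2 * (((k : ℝ) + 1) * |a (k + 1)|) := ha.mul_left 2
    have hg : ∀ n s, HasDerivAt (g n) (g' n s) s := by
      intro n s
      have h1 : HasDerivAt (fun y : ℝ => ((n : ℝ) + 1) * y) ((n : ℝ) + 1) s := by
        simpa using (hasDerivAt_id s).const_mul ((n : ℝ) + 1)
      have h2 := (h1.sin).const_mul (a (n + 1) * (1 + r ^ (2 * (n + 1))))
      rw [hg_def, hg'_def]
      exact h2.congr_deriv (by beta_reduce; ring)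
    have hg' : ∀ n s, ‖g' n s‖ ≤ 2 * (((n : ℝ) + 1) * |a (n + 1)|) := by
      intro n s
      rw [hg'_def, Real.norm_eq_abs]
      have h2 : |1 + r ^ (2 * (n + 1))| ≤ 2 := by
        rw [abs_le]; constructor <;> nlinarith [hrp (2 * (n + 1)), hrle (2 * (n + 1))]
      calc |((n : ℝ) + 1) * a (n + 1) * (1 + r ^ (2 * (n + 1))) *
              Real.cos (((n : ℝ) + 1) * s)|
          = ((n : ℝ) + 1) * |a (n + 1)| * |1 + r ^ (2 * (n + 1))| *
              |Real.cos (((n : ℝ) + 1) * s)| := by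
            rw [abs_mul, abs_mul, abs_mul, abs_of_nonneg (by positivity : (0:ℝ) ≤ (n : ℝ) + 1)]
        _ ≤ ((n : ℝ) + 1) * |a (n + 1)| * 2 * 1 := by
            gcongr <;> first
              | exact h2
              | exact Real.abs_cos_le_one _
              | positivity
        _ = 2 * (((n : ℝ) + 1) * |a (n + 1)|) := by ring
    have hg0 : Summable fun n => g n 0 := by
      have : (fun n => g n 0) = fun n => 0 := by
        funext n; rw [hg_def]; simp
      rw [this]; exact summable_zero
    have hts := hasDerivAt_tsum hu hg hg' hg0 t
    have hxfun : x = fun s => -s - ∑' n, g n s := by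
      funext s; rw [hx s]
    rw [hxfun, hxd t]
    exact ((hasDerivAt_id t).neg).sub hts
  refine ⟨hderiv, ?_⟩
  -- the two series as functions
  set gf : ℝ → ℝ := fun t => ∑' k, B k * Real.cos (((k : ℝ) + 1) * t) with hgf
  set hf : ℝ → ℝ := fun t => ∑' k, C k * Real.cos (((k : ℝ) + 1) * t) with hhf
  have hcos_cont : ∀ k : ℕ, Continuous fun t : ℝ => Real.cos (((k : ℝ) + 1) * t) :=
    fun k => Real.continuous_cos.comp (continuous_const.mul continuous_id)
  have hBbd : ∀ (k : ℕ) (t : ℝ), ‖B k * Real.cos (((k : ℝ) + 1) * t)‖ ≤ |B k| := by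
    intro k t
    rw [Real.norm_eq_abs, abs_mul]
    exact mul_le_mul_of_nonneg_left (Real.abs_cos_le_one _) (abs_nonneg _) |>.trans
      (by rw [mul_one])
  have hCbd : ∀ (k : ℕ) (t : ℝ), ‖C k * Real.cos (((k : ℝ) + 1) * t)‖ ≤ |C k| := by
    intro k t
    rw [Real.norm_eq_abs, abs_mul]
    exact mul_le_mul_of_nonneg_left (Real.abs_cos_le_one _) (abs_nonneg _) |>.trans
      (by rw [mul_one])
  have hgc : Continuous gf :=
    continuous_tsum (fun k => continuous_const.mul (hcos_cont k)) hBs hBbd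
  have hhc : Continuous hf :=
    continuous_tsum (fun k => continuous_const.mul (hcos_cont k)) hCs hCbd
  have hhbd : ∀ t : ℝ, |hf t| ≤ ∑' k, |C k| := by
    intro t
    calc |hf t| ≤ ∑' k, ‖C k * Real.cos (((k : ℝ) + 1) * t)‖ := by
          rw [← Real.norm_eq_abs]
          exact norm_tsum_le_tsum_norm
            (hCs.of_nonneg_of_le (fun k => norm_nonneg _) (fun k => hCbd k t))
      _ ≤ ∑' k, |C k| := by
          apply Summable.tsum_le_tsum (fun k => hCbd k t) _ hCs
          exact hCs.of_nonneg_of_le (fun k => norm_nonneg _) (fun k => hCbd k t)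
  -- basic integrals
  have hIcos : ∀ k : ℕ, (∫ t in (-Real.pi)..Real.pi, Real.cos (((k : ℝ) + 1) * t)) = 0 := by
    intro k
    have : (fun t : ℝ => Real.cos (((k : ℝ) + 1) * t))
        = fun t : ℝ => Real.cos (((k + 1 : ℤ) : ℝ) * t) := by push_cast; rfl
    rw [this]
    exact zmc_cos_int (k + 1) (by omega)
  have hIh : (∫ t in (-Real.pi)..Real.pi, hf t) = 0 := by
    rw [hhf]
    rw [zmc_swap C hCs _ hcos_cont 1 (fun k t => Real.abs_cos_le_one _)]
    simp [hIcos]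
  have hIg : (∫ t in (-Real.pi)..Real.pi, gf t) = 0 := by
    rw [hgf]
    rw [zmc_swap B hBs _ hcos_cont 1 (fun k t => Real.abs_cos_le_one _)]
    simp [hIcos]
  -- the product integral
  have hinner : ∀ k : ℕ,
      (∫ t in (-Real.pi)..Real.pi, Real.cos (((k : ℝ) + 1) * t) * hf t) = C k * Real.pi := by
    intro k
    have hrw : ∀ t : ℝ, Real.cos (((k : ℝ) + 1) * t) * hf t
        = ∑' j, C j * (Real.cos (((k : ℝ) + 1) * t) * Real.cos (((j : ℝ) + 1) * t)) := by
      intro t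
      rw [hhf, ← tsum_mul_left]
      exact tsum_congr fun j => by ring
    simp_rw [hrw]
    rw [zmc_swap C hCs (fun j t => Real.cos (((k : ℝ) + 1) * t) * Real.cos (((j : ℝ) + 1) * t)) (fun j => (hcos_cont k).mul (hcos_cont j)) 1
      (fun j t => by
        rw [abs_mul]
        exact mul_le_one₀ (Real.abs_cos_le_one _) (abs_nonneg _) (Real.abs_cos_le_one _))]
    have : ∀ j, C j * (∫ t in (-Real.pi)..Real.pi,
        Real.cos (((k : ℝ) + 1) * t) * Real.cos (((j : ℝ) + 1) * t))
        = C j * (if k = j then Real.pi else 0) := by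
      intro j; rw [zmc_ortho k j]
    simp_rw [this]
    rw [tsum_eq_single k (fun j hj => by rw [if_neg (fun h => hj (h.symm)), mul_zero])]
    rw [if_pos rfl]
  have hIgh : (∫ t in (-Real.pi)..Real.pi, gf t * hf t)
      = ∑' k, B k * (C k * Real.pi) := by
    have hrw : ∀ t : ℝ, gf t * hf t
        = ∑' k, B k * (Real.cos (((k : ℝ) + 1) * t) * hf t) := by
      intro t
      rw [hgf, ← tsum_mul_right]
      exact tsum_congr fun k => by ring
    simp_rw [hrw]
    rw [zmc_swap B hBs (fun k t => Real.cos (((k : ℝ) + 1) * t) * hf t) (fun k => (hcos_cont k).mul hhc) (1 * ∑' j, |C j|)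
      (fun k t => by
        rw [abs_mul]
        apply mul_le_mul (Real.abs_cos_le_one _) (hhbd t) (abs_nonneg _) zero_le_one)]
    exact tsum_congr fun k => by rw [hinner k]
  -- assemble
  have hint_h : IntervalIntegrable hf volume (-Real.pi) Real.pi :=
    hhc.intervalIntegrable _ _
  have hint_g : IntervalIntegrable gf volume (-Real.pi) Real.pi :=
    hgc.intervalIntegrable _ _
  have hint_gh : IntervalIntegrable (fun t => gf t * hf t) volume (-Real.pi) Real.pi :=
    (hgc.mul hhc).intervalIntegrable _ _
  have hsplit : (∫ t in (-Real.pi)..Real.pi, η t * xd t)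
      = (∫ t in (-Real.pi)..Real.pi,
          (a₀ + a₀ * hf t) - (gf t + gf t * hf t)) := by
    apply intervalIntegral.integral_congr
    intro t _
    simp only [hη' t, hxd' t, hgf, hhf]
    ring
  have hval : (∫ t in (-Real.pi)..Real.pi, η t * xd t)
      = 2 * Real.pi * a₀ - ∑' k, B k * (C k * Real.pi) := by
    rw [hsplit, intervalIntegral.integral_sub
        ((intervalIntegrable_const).add (hint_h.const_mul a₀))
        (hint_g.add hint_gh),
      intervalIntegral.integral_add (intervalIntegrable_const) (hint_h.const_mul a₀),
      intervalIntegral.integral_add hint_g hint_gh,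
      intervalIntegral.integral_const_mul, hIh, hIg, hIgh,
      intervalIntegral.integral_const]
    simp only [smul_eq_mul]
    ring
  have htsum_eq : (∑' k, B k * (C k * Real.pi))
      = Real.pi * ∑' k : ℕ, ((k : ℝ) + 1) * (a (k + 1)) ^ 2 * (1 - r ^ (4 * (k + 1))) := by
    rw [← tsum_mul_left]
    refine tsum_congr fun k => ?_
    simp only [hBdef, hCdef]
    have hpow : r ^ (2 * (k + 1)) * r ^ (2 * (k + 1)) = r ^ (4 * (k + 1)) := by
      rw [← pow_add]; congr 1; ring
    linear_combination (((k : ℝ) + 1) * a (k + 1) ^ 2 * Real.pi) * hpow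
  have hI : (∫ t in (-Real.pi)..Real.pi, η t * xd t)
      = 2 * Real.pi * a₀ - Real.pi * ∑' k : ℕ, ((k : ℝ) + 1) * (a (k + 1)) ^ 2 *
        (1 - r ^ (4 * (k + 1))) := by rw [hval, htsum_eq]
  refine ⟨hI, ?_⟩
  rw [hI]
  have hπ : Real.pi > 0 := Real.pi_pos
  constructor
  · intro h0
    have h1 : Real.pi * (2 * a₀ - ∑' k : ℕ, ((k : ℝ) + 1) * (a (k + 1)) ^ 2 *
        (1 - r ^ (4 * (k + 1)))) = 0 := by linarith
    have h2 := (mul_eq_zero.1 h1).resolve_left (ne_of_gt hπ)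
    linarith
  · intro h0
    rw [h0]; ring
end
end
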